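/- arXiv:2601.20469 — 4 statements merged into one kernel-verified Lean document; each statement's English description precedes it below -/
import Mathlib

section
/- Let T > 0, let (Ω, 𝔉, P) be a probability space, and let V : [0,T] × Ω → ℝ be a jointly measurable stochastic process whose empirical distribution function F_T(x)(ω) = (1/T)·Leb{t ∈ [0,T] : V_t(ω) ≤ x} is, for P-almost every ω, a continuous function of x ∈ ℝ. For each n let V̂ⁿ : [0,T] × Ω → ℝ be jointly measurable and suppose that for every t ∈ [0,T], V̂ⁿ_t → V_t in probability as n → ∞. Then the realized empirical distribution functions F_{n,T}(x) = (1/T)·Leb{t ∈ [0,T] : V̂ⁿ_t ≤ x} satisfy sup_{x ∈ ℝ₊} |F_{n,T}(x) − F_T(x)| → 0 in probability as n → ∞. -/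
open MeasureTheory Filter Set Topology ENNReal
open scoped ENNReal

namespace RealizedEDF

lemma ennreal_squeeze_zero {f g : ℕ → ℝ≥0∞} (hg : Tendsto g atTop (𝓝 0))
    (hfg : ∀ n, f n ≤ g n) : Tendsto f atTop (𝓝 0) :=
  tendsto_of_tendsto_of_tendsto_of_le_of_le tendsto_const_nhds hg (fun _ => zero_le) hfg

lemma vol_le (T : ℝ) (p : ℝ → Prop) :
    volume {t ∈ Icc (0:ℝ) T | p t} ≤ ENNReal.ofReal T := by
  calc volume {t ∈ Icc (0:ℝ) T | p t} ≤ volume (Icc (0:ℝ) T) :=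
        measure_mono (sep_subset _ _)
  _ = ENNReal.ofReal T := by rw [Real.volume_Icc, sub_zero]

lemma vol_ne_top (T : ℝ) (p : ℝ → Prop) :
    volume {t ∈ Icc (0:ℝ) T | p t} ≠ ∞ :=
  ((vol_le T p).trans_lt ENNReal.ofReal_lt_top).ne

lemma edf_mono (T : ℝ) (hT : 0 < T) (g : ℝ → ℝ) {x y : ℝ} (hxy : x ≤ y) :
    (1/T) * (volume {t ∈ Icc (0:ℝ) T | g t ≤ x}).toReal
      ≤ (1/T) * (volume {t ∈ Icc (0:ℝ) T | g t ≤ y}).toReal := by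
  have h1 : volume {t ∈ Icc (0:ℝ) T | g t ≤ x} ≤ volume {t ∈ Icc (0:ℝ) T | g t ≤ y} :=
    measure_mono (fun t ht => ⟨ht.1, ht.2.trans hxy⟩)
  have := ENNReal.toReal_mono (vol_ne_top T _) h1
  have h0 : (0:ℝ) < 1/T := by positivity
  nlinarith

lemma edf_le_one (T : ℝ) (hT : 0 < T) (g : ℝ → ℝ) (x : ℝ) :
    (1/T) * (volume {t ∈ Icc (0:ℝ) T | g t ≤ x}).toReal ≤ 1 := by
  have h1 := ENNReal.toReal_mono ENNReal.ofReal_ne_top (vol_le T (fun t => g t ≤ x))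
  rw [ENNReal.toReal_ofReal hT.le] at h1
  have h0 : (0:ℝ) < 1/T := by positivity
  calc (1/T) * (volume {t ∈ Icc (0:ℝ) T | g t ≤ x}).toReal ≤ (1/T) * T := by nlinarith
  _ = 1 := by field_simp

lemma edf_tendsto_one (T : ℝ) (hT : 0 < T) (g : ℝ → ℝ) :
    Tendsto (fun m : ℕ => (1/T) * (volume {t ∈ Icc (0:ℝ) T | g t ≤ (m:ℝ)}).toReal)
      atTop (𝓝 1) := by
  have hmono : Monotone fun m : ℕ => {t ∈ Icc (0:ℝ) T | g t ≤ (m:ℝ)} := by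
    intro i j hij t ht
    exact ⟨ht.1, ht.2.trans (by exact_mod_cast hij)⟩
  have hunion : ⋃ m : ℕ, {t ∈ Icc (0:ℝ) T | g t ≤ (m:ℝ)} = Icc (0:ℝ) T := by
    ext t
    constructor
    · intro hm
      rcases mem_iUnion.1 hm with ⟨i, hi⟩
      exact hi.1
    · intro ht
      obtain ⟨m, hm⟩ := exists_nat_ge (g t)
      exact mem_iUnion.2 ⟨m, ht, hm⟩
  have h1 := tendsto_measure_iUnion_atTop (μ := (volume : Measure ℝ)) hmono
  rw [hunion, Real.volume_Icc, sub_zero] at h1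
  have h2 : Tendsto (fun m : ℕ => (volume {t ∈ Icc (0:ℝ) T | g t ≤ (m:ℝ)}).toReal)
      atTop (𝓝 T) := by
    have h3 := (ENNReal.tendsto_toReal (show ENNReal.ofReal T ≠ ⊤ from ENNReal.ofReal_ne_top)).comp h1
    simpa [Function.comp_def, ENNReal.toReal_ofReal hT.le] using h3
  have h4 := h2.const_mul (1/T)
  simpa [one_div, inv_mul_cancel₀ hT.ne'] using h4

lemma meas_tendsto_zero_of_eventually {Ω : Type*} [MeasurableSpace Ω]
    (P : Measure Ω) [IsProbabilityMeasure P] (A : ℕ → Set Ω)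
    (hA : ∀ k, MeasurableSet (A k))
    (h : ∀ᵐ ω ∂P, ∀ᶠ k in atTop, ω ∉ A k) :
    Tendsto (fun k => P (A k)) atTop (𝓝 0) := by
  have heq : ∀ k, P (A k) = ∫⁻ ω, (A k).indicator (fun _ => (1:ℝ≥0∞)) ω ∂P := by
    intro k; exact (lintegral_indicator_one (hA k)).symm
  simp only [heq]
  have hDC := tendsto_lintegral_of_dominated_convergence (μ := P)
    (F := fun k ω => (A k).indicator (fun _ => (1:ℝ≥0∞)) ω) (f := fun _ => 0)
    (bound := fun _ => 1)
    (fun k => measurable_const.indicator (hA k))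
    (fun k => ae_of_all _ fun ω => by
      by_cases hω : ω ∈ A k <;> simp [Set.indicator, hω])
    (by simp)
    ?_
  · simpa using hDC
  · filter_upwards [h] with ω hω
    refine Tendsto.congr' ?_ tendsto_const_nhds
    filter_upwards [hω] with k hk
    simp [Set.indicator, hk]

lemma meas_sect (T x : ℝ) {Ω : Type*} [MeasurableSpace Ω] (W : ℝ → Ω → ℝ)
    (hW : Measurable (Function.uncurry W)) :
    Measurable fun ω => volume {t ∈ Icc (0:ℝ) T | W t ω ≤ x} := by
  have hs : MeasurableSet {p : ℝ × Ω | p.1 ∈ Icc (0:ℝ) T ∧ W p.1 p.2 ≤ x} :=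
    (measurable_fst measurableSet_Icc).inter (measurableSet_le hW measurable_const)
  exact measurable_measure_prodMk_right (μ := (volume : Measure ℝ)) hs


lemma pointwise
    (T : ℝ) (hT : 0 < T)
    (Ω : Type*) [MeasurableSpace Ω] (P : Measure Ω) [IsProbabilityMeasure P]
    (V : ℝ → Ω → ℝ) (hV : Measurable (Function.uncurry V))
    (FT : ℝ → Ω → ℝ)
    (hFT : ∀ x ω, FT x ω
      = (1 / T) * (volume {t ∈ Set.Icc (0:ℝ) T | V t ω ≤ x}).toReal)
    (hcont : ∀ᵐ ω ∂P, Continuous fun x => FT x ω)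
    (Vhat : ℕ → ℝ → Ω → ℝ)
    (hVhat : ∀ n, Measurable (Function.uncurry (Vhat n)))
    (hconv : ∀ t ∈ Set.Icc (0:ℝ) T,
      TendstoInMeasure P (fun n => Vhat n t) atTop (V t))
    (FnT : ℕ → ℝ → Ω → ℝ)
    (hFnT : ∀ n x ω, FnT n x ω
      = (1 / T) * (volume {t ∈ Set.Icc (0:ℝ) T | Vhat n t ω ≤ x}).toReal)
    (x c : ℝ) (hc : 0 < c) :
    Tendsto (fun n => P {ω | c ≤ |FnT n x ω - FT x ω|}) atTop (𝓝 0) := by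
  classical
  set μ : Measure ℝ := volume.restrict (Set.Icc 0 T) with hμdef
  haveI : IsFiniteMeasure μ := by
    constructor
    rw [hμdef, Measure.restrict_apply_univ]
    exact measure_Icc_lt_top
  have hres : ∀ (q : ℝ → Prop), volume {t ∈ Set.Icc (0:ℝ) T | q t} = μ {t | q t} := by
    intro q
    rw [hμdef, Measure.restrict_apply' measurableSet_Icc]
    congr 1
    ext t
    simp [and_comm]
  -- the symmetric-difference sets
  set S : ℕ → Set (Ω × ℝ) := fun n =>
    {p | (V p.2 p.1 ≤ x ∧ ¬ Vhat n p.2 p.1 ≤ x) ∨ (Vhat n p.2 p.1 ≤ x ∧ ¬ V p.2 p.1 ≤ x)}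
    with hSdef
  have hVm : Measurable fun p : Ω × ℝ => V p.2 p.1 := hV.comp measurable_swap
  have hVhm : ∀ n, Measurable fun p : Ω × ℝ => Vhat n p.2 p.1 :=
    fun n => (hVhat n).comp measurable_swap
  have hSm : ∀ n, MeasurableSet (S n) := by
    intro n
    exact ((measurableSet_le hVm measurable_const).inter
        (measurableSet_le (hVhm n) measurable_const).compl).union
      ((measurableSet_le (hVhm n) measurable_const).inter
        (measurableSet_le hVm measurable_const).compl)
  have hΔ_eq : ∀ n, ∫⁻ ω, μ (Prod.mk ω ⁻¹' S n) ∂P = (P.prod μ) (S n) :=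
    fun n => (Measure.prod_apply (hSm n)).symm
  -- |FnT - FT| is controlled by the measure of the symmetric difference
  have habs : ∀ n ω, |FnT n x ω - FT x ω| ≤ (1/T) * (μ (Prod.mk ω ⁻¹' S n)).toReal := by
    intro n ω
    set a := μ {t : ℝ | V t ω ≤ x} with ha
    set b := μ {t : ℝ | Vhat n t ω ≤ x} with hb
    set s := μ (Prod.mk ω ⁻¹' S n) with hs
    have hsect : Prod.mk ω ⁻¹' S n
        = {t : ℝ | (V t ω ≤ x ∧ ¬ Vhat n t ω ≤ x) ∨ (Vhat n t ω ≤ x ∧ ¬ V t ω ≤ x)} := rfl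
    have hba : b ≤ a + s := by
      rw [hb, ha, hs, hsect]
      refine (measure_mono ?_).trans (measure_union_le _ _)
      intro t ht
      by_cases h : V t ω ≤ x
      · exact Or.inl h
      · exact Or.inr (Or.inr ⟨ht, h⟩)
    have hab : a ≤ b + s := by
      rw [hb, ha, hs, hsect]
      refine (measure_mono ?_).trans (measure_union_le _ _)
      intro t ht
      by_cases h : Vhat n t ω ≤ x
      · exact Or.inl h
      · exact Or.inr (Or.inl ⟨ht, h⟩)
    have hane : a ≠ ∞ := measure_ne_top μ _
    have hbne : b ≠ ∞ := measure_ne_top μ _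
    have hsne : s ≠ ∞ := measure_ne_top μ _
    have h1 : b.toReal ≤ a.toReal + s.toReal := by
      rw [← ENNReal.toReal_add hane hsne]
      exact ENNReal.toReal_mono (by simp [ENNReal.add_ne_top, hane, hsne]) hba
    have h2 : a.toReal ≤ b.toReal + s.toReal := by
      rw [← ENNReal.toReal_add hbne hsne]
      exact ENNReal.toReal_mono (by simp [ENNReal.add_ne_top, hbne, hsne]) hab
    have habs' : |b.toReal - a.toReal| ≤ s.toReal := abs_sub_le_iff.2 ⟨by linarith, by linarith⟩
    have hEq : FnT n x ω - FT x ω = (1/T) * (b.toReal - a.toReal) := by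
      rw [hFnT, hFT, hres, hres, ← hb, ← ha]; ring
    rw [hEq, abs_mul, abs_of_pos (by positivity : (0:ℝ) < 1/T)]
    have h0 : (0:ℝ) < 1/T := by positivity
    nlinarith
  -- event inclusion and Markov
  have hmarkov : ∀ n, P {ω | c ≤ |FnT n x ω - FT x ω|}
      ≤ (P.prod μ) (S n) / ENNReal.ofReal (c * T) := by
    intro n
    have hsub2 : {ω | c ≤ |FnT n x ω - FT x ω|}
        ⊆ {ω | ENNReal.ofReal (c * T) ≤ μ (Prod.mk ω ⁻¹' S n)} := by
      intro ω hω
      have h1 := (Set.mem_setOf_eq ▸ hω).trans (habs n ω)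
      have h2 : c * T ≤ (μ (Prod.mk ω ⁻¹' S n)).toReal := by
        rw [div_mul_eq_mul_div, one_mul] at h1
        exact (le_div_iff₀ hT).mp h1
      exact ENNReal.ofReal_le_of_le_toReal h2
    refine (measure_mono hsub2).trans ?_
    rw [← hΔ_eq n]
    exact meas_ge_le_lintegral_div
      (measurable_measure_prodMk_left (hSm n)).aemeasurable
      (by simp [ENNReal.ofReal_eq_zero]; nlinarith)
      ENNReal.ofReal_ne_top
  -- the measure of {V = x} (in the product) is zero
  have hnull : (P.prod μ) {p : Ω × ℝ | V p.2 p.1 = x} = 0 := by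
    rw [Measure.prod_apply (measurableSet_eq_fun hVm measurable_const)]
    rw [lintegral_eq_zero_iff
      (measurable_measure_prodMk_left (measurableSet_eq_fun hVm measurable_const))]
    filter_upwards [hcont] with ω hcω
    show μ (Prod.mk ω ⁻¹' {p : Ω × ℝ | V p.2 p.1 = x}) = 0
    have hsect : Prod.mk ω ⁻¹' {p : Ω × ℝ | V p.2 p.1 = x} = {t : ℝ | V t ω = x} := rfl
    rw [hsect]
    set a : ℝ → ℝ≥0∞ := fun y => μ {t : ℝ | V t ω ≤ y} with hadef
    have hVtm : Measurable fun t => V t ω :=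
      hV.comp (measurable_id.prodMk measurable_const)
    have hafin : ∀ y, a y ≠ ∞ := fun y => measure_ne_top μ _
    have hamono : Monotone a := fun y z hyz =>
      measure_mono (fun t ht => le_trans ht hyz)
    have haFT : ∀ y, (a y).toReal = T * FT y ω := by
      intro y
      rw [hFT, hres]
      show (μ {t : ℝ | V t ω ≤ y}).toReal = T * (1 / T * (μ {t : ℝ | V t ω ≤ y}).toReal)
      field_simp
    have hseq : Tendsto (fun n : ℕ => x - 1/(n+1)) atTop (𝓝 x) := by
      have h0 := tendsto_one_div_add_atTop_nhds_zero_nat (𝕜 := ℝ)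
      simpa using tendsto_const_nhds.sub h0
    have htr : Tendsto (fun n : ℕ => (a (x - 1/(n+1))).toReal) atTop (𝓝 ((a x).toReal)) := by
      simp only [haFT]
      exact ((hcω.tendsto x).comp hseq).const_mul T
    have hform : ∀ n : ℕ, a x - a (x - 1/(n+1))
        = ENNReal.ofReal ((a x).toReal - (a (x - 1/(n+1))).toReal) := by
      intro n
      rw [← ENNReal.toReal_sub_of_le (hamono (sub_le_self x (by positivity))) (hafin x)]
      exact (ENNReal.ofReal_toReal (by
        exact ne_top_of_le_ne_top (hafin x) (tsub_le_self))).symm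
    have hdiff : Tendsto (fun n : ℕ => a x - a (x - 1/(n+1))) atTop (𝓝 0) := by
      simp only [hform]
      have : Tendsto (fun n : ℕ => (a x).toReal - (a (x - 1/(n+1))).toReal) atTop (𝓝 0) := by
        have h5 := htr.const_sub ((a x).toReal)
        simpa using h5
      simpa using ENNReal.tendsto_ofReal this
    have hbound : ∀ n : ℕ, μ {t : ℝ | V t ω = x} ≤ a x - a (x - 1/(n+1)) := by
      intro n
      have hsub : {t : ℝ | V t ω = x}
          ⊆ {t : ℝ | V t ω ≤ x} \ {t : ℝ | V t ω ≤ x - 1/(n+1)} := by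
        intro t ht
        have hx : V t ω = x := ht
        constructor
        · exact le_of_eq hx
        · intro hcontra
          have : (0:ℝ) < 1/(n+1) := by positivity
          simp only [Set.mem_setOf_eq, hx] at hcontra
          linarith
      refine (measure_mono hsub).trans (le_of_eq ?_)
      exact measure_diff (fun t ht => le_trans ht (sub_le_self x (by positivity)))
        ((hVtm measurableSet_Iic : MeasurableSet {t : ℝ | V t ω ≤ x - 1/(n+1)})).nullMeasurableSet
        (hafin _)
    have hle0 : μ {t : ℝ | V t ω = x} ≤ 0 := ge_of_tendsto' hdiff hbound
    exact le_antisymm hle0 zero_le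
  -- core: product measure of S n tends to 0
  have hScore : Tendsto (fun n => (P.prod μ) (S n)) atTop (𝓝 0) := by
    rw [ENNReal.tendsto_atTop_zero]
    intro η hη
    have hη2 : (0:ℝ≥0∞) < η / 2 := ENNReal.div_pos hη.ne' (by norm_num)
    -- the shrinking neighborhoods of {V = x}
    set W : ℕ → Set (Ω × ℝ) := fun i => {p | |V p.2 p.1 - x| ≤ 1/((i:ℝ)+1)} with hWdef
    have hWm : ∀ i, MeasurableSet (W i) :=
      fun i => measurableSet_le (hVm.sub measurable_const).abs measurable_const
    have hWanti : Antitone W := by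
      intro i j hij p hp
      show |V p.2 p.1 - x| ≤ 1/((i:ℝ)+1)
      refine le_trans hp ?_
      have h1 : (0:ℝ) < (i:ℝ)+1 := by positivity
      have h2 : (i:ℝ)+1 ≤ (j:ℝ)+1 := by
        have := (Nat.cast_le (α := ℝ)).2 hij
        linarith
      exact one_div_le_one_div_of_le h1 h2
    have hWlim : Tendsto (fun i => (P.prod μ) (W i)) atTop (𝓝 ((P.prod μ) (⋂ i, W i))) :=
      tendsto_measure_iInter_atTop (fun i => (hWm i).nullMeasurableSet) hWanti
        ⟨0, measure_ne_top _ _⟩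
    have hWsub : (⋂ i, W i) ⊆ {p : Ω × ℝ | V p.2 p.1 = x} := by
      intro p hp
      have h1 : ∀ i : ℕ, |V p.2 p.1 - x| ≤ 1/((i:ℝ)+1) := by
        intro i; exact mem_iInter.1 hp i
      have h2 : |V p.2 p.1 - x| ≤ 0 :=
        ge_of_tendsto' tendsto_one_div_add_atTop_nhds_zero_nat h1
      have h3 : V p.2 p.1 - x = 0 := by
        have := abs_nonneg (V p.2 p.1 - x)
        have h4 : |V p.2 p.1 - x| = 0 := le_antisymm h2 this
        exact abs_eq_zero.1 h4
      exact sub_eq_zero.1 h3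
    have hWzero : Tendsto (fun i => (P.prod μ) (W i)) atTop (𝓝 0) := by
      have h0 : (P.prod μ) (⋂ i, W i) = 0 :=
        le_antisymm (le_trans (measure_mono hWsub) hnull.le) zero_le
      rwa [h0] at hWlim
    obtain ⟨i, hi⟩ := (ENNReal.tendsto_atTop_zero.mp hWzero) (η/2) hη2
    have hiW : (P.prod μ) (W i) ≤ η/2 := hi i le_rfl
    set δ : ℝ := 1/((i:ℝ)+1) with hδdef
    have hδpos : 0 < δ := by positivity
    -- the bad approximation sets
    set U : ℕ → Set (Ω × ℝ) := fun n => {p | δ ≤ dist (Vhat n p.2 p.1) (V p.2 p.1)} with hUdef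
    have hUm : ∀ n, MeasurableSet (U n) :=
      fun n => measurableSet_le measurable_const ((hVhm n).dist hVm)
    have hUlim : Tendsto (fun n => (P.prod μ) (U n)) atTop (𝓝 0) := by
      have heq : ∀ n, (P.prod μ) (U n) = ∫⁻ t, P ((fun ω => (ω, t)) ⁻¹' (U n)) ∂μ :=
        fun n => Measure.prod_apply_symm (hUm n)
      have hmeas : ∀ n, Measurable fun t => P ((fun ω => (ω, t)) ⁻¹' U n) :=
        fun n => measurable_measure_prodMk_right (hUm n)
      have hlim : ∀ᵐ t ∂μ, Tendsto (fun n => P ((fun ω => (ω, t)) ⁻¹' U n)) atTop (𝓝 0) := by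
        have hae : ∀ᵐ t ∂μ, t ∈ Set.Icc (0:ℝ) T := by
          rw [hμdef]
          exact ae_restrict_mem measurableSet_Icc
        filter_upwards [hae] with t ht
        refine (hconv t ht (ENNReal.ofReal δ) (ENNReal.ofReal_pos.2 hδpos)).congr (fun n => ?_)
        congr 1
        ext ω
        simp only [Set.mem_setOf_eq, Set.mem_preimage, hUdef, edist_dist]
        exact ENNReal.ofReal_le_ofReal_iff dist_nonneg
      have hDC := tendsto_lintegral_of_dominated_convergence (μ := μ)
        (F := fun n t => P ((fun ω => (ω, t)) ⁻¹' U n)) (f := fun _ => 0)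
        (bound := fun _ => 1) hmeas
        (fun n => ae_of_all _ fun t => prob_le_one)
        (by simp only [lintegral_one]; exact measure_ne_top μ _)
        hlim
      simp only [lintegral_zero] at hDC
      refine Tendsto.congr (fun n => (heq n).symm) hDC
    obtain ⟨N, hN⟩ := (ENNReal.tendsto_atTop_zero.mp hUlim) (η/2) hη2
    refine ⟨N, fun n hn => ?_⟩
    have hcov : S n ⊆ U n ∪ W i := by
      intro p hp
      by_cases h : δ ≤ dist (Vhat n p.2 p.1) (V p.2 p.1)
      · exact Or.inl h
      · push_neg at h
        rw [Real.dist_eq] at h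
        have hd := abs_sub_lt_iff.mp h
        refine Or.inr ?_
        show |V p.2 p.1 - x| ≤ 1/((i:ℝ)+1)
        rw [← hδdef, abs_le]
        rcases hp with ⟨h1, h2⟩ | ⟨h1, h2⟩
        · push_neg at h2
          constructor <;> linarith [hd.1, hd.2]
        · push_neg at h2
          constructor <;> linarith [hd.1, hd.2]
    calc (P.prod μ) (S n) ≤ (P.prod μ) (U n) + (P.prod μ) (W i) :=
          (measure_mono hcov).trans (measure_union_le _ _)
    _ ≤ η/2 + η/2 := add_le_add (hN n hn) hiW
    _ = η := ENNReal.add_halves η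
  -- conclude by squeezing
  have hdiv : Tendsto (fun n => (P.prod μ) (S n) / ENNReal.ofReal (c * T)) atTop (𝓝 0) := by
    simp only [div_eq_mul_inv]
    have hcT : ENNReal.ofReal (c * T) ≠ 0 := by
      simp only [ne_eq, ENNReal.ofReal_eq_zero, not_le]
      positivity
    have h6 := ENNReal.Tendsto.mul_const (b := (ENNReal.ofReal (c * T))⁻¹) hScore
      (Or.inr (ENNReal.inv_ne_top.2 hcT))
    simpa using h6
  exact ennreal_squeeze_zero hdiv hmarkov
end RealizedEDF

open RealizedEDF

/-- Consistency of the realized empirical distribution function (conditional/skeleton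
form of Theorem 3.1): if the spot-variance estimators converge pointwise in probability
and the true EDF is a.s. continuous, then the realized EDF converges uniformly over
`ℝ₊` in probability. -/
theorem realized_edf_uniformly_consistent
    (T : ℝ) (hT : 0 < T)
    (Ω : Type*) [MeasurableSpace Ω] (P : Measure Ω) [IsProbabilityMeasure P]
    (V : ℝ → Ω → ℝ)
    (hV : Measurable (Function.uncurry V))
    (FT : ℝ → Ω → ℝ)
    (hFT : ∀ x ω, FT x ω
      = (1 / T) * (volume {t ∈ Set.Icc (0:ℝ) T | V t ω ≤ x}).toReal)
    (hcont : ∀ᵐ ω ∂P, Continuous fun x => FT x ω)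
    (Vhat : ℕ → ℝ → Ω → ℝ)
    (hVhat : ∀ n, Measurable (Function.uncurry (Vhat n)))
    (hconv : ∀ t ∈ Set.Icc (0:ℝ) T,
      TendstoInMeasure P (fun n => Vhat n t) atTop (V t))
    (FnT : ℕ → ℝ → Ω → ℝ)
    (hFnT : ∀ n x ω, FnT n x ω
      = (1 / T) * (volume {t ∈ Set.Icc (0:ℝ) T | Vhat n t ω ≤ x}).toReal) :
    ∀ ε > 0,
      Tendsto
        (fun n => P {ω | ε ≤ ⨆ x : {x : ℝ // 0 ≤ x}, |FnT n x ω - FT x ω|})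
        atTop (nhds 0) := by
  intro ε hε
  haveI : Nonempty {x : ℝ // 0 ≤ x} := ⟨⟨0, le_rfl⟩⟩
  have hFTm : ∀ x, Measurable fun ω => FT x ω := by
    intro x
    have : (fun ω => FT x ω) = fun ω =>
        (1 / T) * (volume {t ∈ Set.Icc (0:ℝ) T | V t ω ≤ x}).toReal := by
      funext ω; exact hFT x ω
    rw [this]
    exact measurable_const.mul ((meas_sect T x V hV).ennreal_toReal)
  have hFTmono : ∀ ω {x y : ℝ}, x ≤ y → FT x ω ≤ FT y ω := by
    intro ω x y h
    rw [hFT, hFT]; exact edf_mono T hT _ h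
  have hFnTmono : ∀ n ω {x y : ℝ}, x ≤ y → FnT n x ω ≤ FnT n y ω := by
    intro n ω x y h
    rw [hFnT, hFnT]; exact edf_mono T hT _ h
  have hFTle1 : ∀ x ω, FT x ω ≤ 1 := by
    intro x ω; rw [hFT]; exact edf_le_one T hT _ x
  have hFnTle1 : ∀ n x ω, FnT n x ω ≤ 1 := by
    intro n x ω; rw [hFnT]; exact edf_le_one T hT _ x
  rw [ENNReal.tendsto_atTop_zero]
  intro η hη
  have hη2 : (0:ℝ≥0∞) < η / 2 := ENNReal.div_pos hη.ne' (by norm_num)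
  have hη4 : (0:ℝ≥0∞) < η / 2 / 2 := ENNReal.div_pos hη2.ne' (by norm_num)
  -- step 1 : choose the cutoff m
  have htail : Tendsto (fun m : ℕ => P {ω | ε/4 ≤ 1 - FT m ω}) atTop (𝓝 0) := by
    apply meas_tendsto_zero_of_eventually P _
      (fun m => measurableSet_le measurable_const (measurable_const.sub (hFTm m)))
    refine ae_of_all _ fun ω => ?_
    have h1 : Tendsto (fun m : ℕ => FT (m:ℝ) ω) atTop (𝓝 1) := by
      have h2 := edf_tendsto_one T hT (fun t => V t ω)
      have h3 : (fun m : ℕ => FT (m:ℝ) ω)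
          = fun m : ℕ => (1/T) * (volume {t ∈ Set.Icc (0:ℝ) T | V t ω ≤ (m:ℝ)}).toReal := by
        funext m; exact hFT _ ω
      rw [h3]; exact h2
    have h4 := h1.eventually (eventually_gt_nhds (show 1 - ε/4 < 1 by linarith))
    filter_upwards [h4] with m hm
    simp only [Set.mem_setOf_eq, not_le, Pi.sub_apply]
    linarith
  obtain ⟨m, hm⟩ := (ENNReal.tendsto_atTop_zero.mp htail) (η/2/2) hη4
  have hmA3 : P {ω | ε/4 ≤ 1 - FT m ω} ≤ η/2/2 := hm m le_rfl
  -- step 2 : choose the mesh k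
  have hosc : Tendsto (fun k : ℕ => P (⋃ j ∈ Finset.range k,
      {ω | ε/4 ≤ FT (((j:ℝ)+1) * ((m:ℝ)/k)) ω - FT ((j:ℝ) * ((m:ℝ)/k)) ω})) atTop (𝓝 0) := by
    apply meas_tendsto_zero_of_eventually P _
      (fun k => (Finset.range k).measurableSet_biUnion (fun j _ =>
        measurableSet_le measurable_const ((hFTm _).sub (hFTm _))))
    filter_upwards [hcont] with ω hcω
    have hUC : UniformContinuousOn (fun x => FT x ω) (Set.Icc 0 (m:ℝ)) :=
      isCompact_Icc.uniformContinuousOn_of_continuous hcω.continuousOn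
    rw [Metric.uniformContinuousOn_iff] at hUC
    obtain ⟨δ, hδpos, hδ⟩ := hUC (ε/4) (by linarith)
    refine eventually_atTop.2 ⟨⌈(m:ℝ)/δ⌉₊ + 1, fun k hk => ?_⟩
    intro hmem
    rw [Set.mem_iUnion₂] at hmem
    obtain ⟨j, hj, hjε⟩ := hmem
    rw [Finset.mem_range] at hj
    rw [Set.mem_setOf_eq] at hjε
    have hk0 : 0 < k := lt_of_lt_of_le (Nat.succ_pos _) hk
    have hk0R : (0:ℝ) < k := by exact_mod_cast hk0
    have hmesh : (m:ℝ)/k < δ := by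
      have h1 : (m:ℝ)/δ ≤ (⌈(m:ℝ)/δ⌉₊ : ℝ) := Nat.le_ceil _
      have h2 : ((⌈(m:ℝ)/δ⌉₊ : ℝ) + 1) ≤ (k:ℝ) := by exact_mod_cast hk
      have h3 : (m:ℝ)/δ < (k:ℝ) := by linarith
      rw [div_lt_iff₀ hk0R]
      rw [div_lt_iff₀ hδpos] at h3
      linarith [h3]
    have hmnn : (0:ℝ) ≤ (m:ℝ) := Nat.cast_nonneg m
    have hmesh0 : (0:ℝ) ≤ (m:ℝ)/k := by positivity
    have hp1 : (j:ℝ) * ((m:ℝ)/k) ∈ Set.Icc 0 (m:ℝ) := by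
      constructor
      · positivity
      · have : (j:ℝ) ≤ (k:ℝ) := by
          have : (j:ℝ) + 1 ≤ (k:ℝ) := by exact_mod_cast hj
          linarith
        calc (j:ℝ) * ((m:ℝ)/k) ≤ (k:ℝ) * ((m:ℝ)/k) := by nlinarith
        _ = (m:ℝ) := by field_simp
    have hp2 : ((j:ℝ)+1) * ((m:ℝ)/k) ∈ Set.Icc 0 (m:ℝ) := by
      constructor
      · positivity
      · have h5 : (j:ℝ) + 1 ≤ (k:ℝ) := by exact_mod_cast hj
        calc ((j:ℝ)+1) * ((m:ℝ)/k) ≤ (k:ℝ) * ((m:ℝ)/k) := by nlinarith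
        _ = (m:ℝ) := by field_simp
    have hdist : dist (((j:ℝ)+1) * ((m:ℝ)/k)) ((j:ℝ) * ((m:ℝ)/k)) < δ := by
      rw [Real.dist_eq]
      have : ((j:ℝ)+1) * ((m:ℝ)/k) - (j:ℝ) * ((m:ℝ)/k) = (m:ℝ)/k := by ring
      rw [this, abs_of_nonneg hmesh0]
      exact hmesh
    have h6 : |FT (((j:ℝ)+1) * ((m:ℝ)/k)) ω - FT ((j:ℝ) * ((m:ℝ)/k)) ω| < ε/4 := by
      have h6' := hδ _ hp2 _ hp1 hdist
      rwa [Real.dist_eq] at h6'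
    have h7 := le_abs_self (FT (((j:ℝ)+1) * ((m:ℝ)/k)) ω - FT ((j:ℝ) * ((m:ℝ)/k)) ω)
    simp only [Pi.sub_apply] at hjε
    linarith
  obtain ⟨k0, hk0⟩ := (ENNReal.tendsto_atTop_zero.mp hosc) (η/2/2) hη4
  set k := max k0 1 with hkdef
  have hk1 : 1 ≤ k := le_max_right _ _
  have hkR : (0:ℝ) < (k:ℝ) := by exact_mod_cast lt_of_lt_of_le Nat.one_pos hk1
  have hmB : P (⋃ j ∈ Finset.range k,
      {ω | ε/4 ≤ FT (((j:ℝ)+1) * ((m:ℝ)/k)) ω - FT ((j:ℝ) * ((m:ℝ)/k)) ω}) ≤ η/2/2 :=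
    hk0 k (le_max_left _ _)
  -- the grid
  set g : ℕ → ℝ := fun j => (j:ℝ) * ((m:ℝ)/k) with hgdef
  have hgk : g k = (m:ℝ) := by
    show (k:ℝ) * ((m:ℝ)/k) = (m:ℝ)
    field_simp
  have hgmono : ∀ {i j : ℕ}, i ≤ j → g i ≤ g j := by
    intro i j hij
    have h1 : (i:ℝ) ≤ (j:ℝ) := by exact_mod_cast hij
    have h2 : (0:ℝ) ≤ (m:ℝ)/k := by positivity
    exact mul_le_mul_of_nonneg_right h1 h2
  -- step 3 : grid-point convergence
  have hgrid : Tendsto (fun n => ∑ j ∈ Finset.range (k+1),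
      P {ω | ε/4 ≤ |FnT n (g j) ω - FT (g j) ω|}) atTop (𝓝 0) := by
    have h1 : ∀ j : ℕ, Tendsto (fun n => P {ω | ε/4 ≤ |FnT n (g j) ω - FT (g j) ω|})
        atTop (𝓝 0) := fun j =>
      pointwise T hT Ω P V hV FT hFT hcont Vhat hVhat hconv FnT hFnT (g j) (ε/4)
        (by linarith)
    have h2 := tendsto_finset_sum (Finset.range (k+1))
      (fun j _ => h1 j)
    simpa using h2
  obtain ⟨N, hN⟩ := (ENNReal.tendsto_atTop_zero.mp hgrid) (η/2) hη2
  refine ⟨N, fun n hn => ?_⟩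
  -- the union bound
  have hincl : {ω | ε ≤ ⨆ x : {x : ℝ // 0 ≤ x}, |FnT n x ω - FT x ω|}
      ⊆ (⋃ j ∈ Finset.range (k+1), {ω | ε/4 ≤ |FnT n (g j) ω - FT (g j) ω|})
        ∪ ((⋃ j ∈ Finset.range k,
            {ω | ε/4 ≤ FT (((j:ℝ)+1) * ((m:ℝ)/k)) ω - FT ((j:ℝ) * ((m:ℝ)/k)) ω})
          ∪ {ω | ε/4 ≤ 1 - FT m ω}) := by
    intro ω hω
    by_contra hnot
    rw [Set.mem_union, Set.mem_union] at hnot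
    push_neg at hnot
    obtain ⟨hn1, hn2, hn3⟩ := hnot
    have h1 : ∀ j : ℕ, j ≤ k → |FnT n (g j) ω - FT (g j) ω| < ε/4 := by
      intro j hj
      have : ω ∉ {ω | ε/4 ≤ |FnT n (g j) ω - FT (g j) ω|} := by
        intro hc
        exact hn1 (Set.mem_biUnion (Finset.mem_range.2 (Nat.lt_succ_of_le hj)) hc)
      simpa [not_le] using this
    have h2 : ∀ j : ℕ, j < k → FT (g (j+1)) ω - FT (g j) ω < ε/4 := by
      intro j hj
      have : ω ∉ {ω | ε/4 ≤ FT (((j:ℝ)+1) * ((m:ℝ)/k)) ω - FT ((j:ℝ) * ((m:ℝ)/k)) ω} := by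
        intro hc
        exact hn2 (Set.mem_biUnion (Finset.mem_range.2 hj) hc)
      have h2' : FT (((j:ℝ)+1) * ((m:ℝ)/k)) ω - FT ((j:ℝ) * ((m:ℝ)/k)) ω < ε/4 := by
        simpa [not_le] using this
      have : g (j+1) = ((j:ℝ)+1) * ((m:ℝ)/k) := by
        show ((j+1:ℕ):ℝ) * ((m:ℝ)/k) = ((j:ℝ)+1) * ((m:ℝ)/k)
        push_cast; ring
      rw [this]
      exact h2'
    have h3 : 1 - FT m ω < ε/4 := by simpa [not_le] using hn3
    -- pointwise bound on |FnT - FT| for every x ≥ 0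
    have key : ∀ x : ℝ, 0 ≤ x → |FnT n x ω - FT x ω| ≤ ε/2 := by
      intro x hx
      by_cases hxm : x ≤ (m:ℝ)
      · -- find the grid cell
        obtain ⟨j, hjk, hg1, hg2⟩ : ∃ j : ℕ, j + 1 ≤ k ∧ g j ≤ x ∧ x ≤ g (j+1) := by
          by_cases hm0 : (m:ℕ) = 0
          · refine ⟨0, hk1, ?_, ?_⟩
            · show ((0:ℕ):ℝ) * ((m:ℝ)/k) ≤ x
              simpa using hx
            · have hx0 : x = 0 := le_antisymm (by
                have : ((m:ℕ):ℝ) = 0 := by exact_mod_cast hm0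
                linarith) hx
              show x ≤ ((0+1:ℕ):ℝ) * ((m:ℝ)/k)
              rw [hx0]
              positivity
          · have hmpos : (0:ℝ) < (m:ℝ) := by exact_mod_cast Nat.pos_of_ne_zero hm0
            set j0 := ⌊x * k / m⌋₊ with hj0def
            refine ⟨min j0 (k-1), ?_, ?_, ?_⟩
            · have : min j0 (k-1) ≤ k - 1 := min_le_right _ _
              omega
            · have h5 : ((min j0 (k-1) : ℕ):ℝ) ≤ (j0:ℝ) := by
                exact_mod_cast min_le_left j0 (k-1)
              have h6 : (j0:ℝ) ≤ x * k / m := Nat.floor_le (by positivity)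
              have h7 : ((min j0 (k-1) : ℕ):ℝ) * ((m:ℝ)/k) ≤ (x * k / m) * ((m:ℝ)/k) := by
                have : (0:ℝ) ≤ (m:ℝ)/k := by positivity
                nlinarith
              have h8 : (x * k / m) * ((m:ℝ)/k) = x := by field_simp
              show ((min j0 (k-1) : ℕ):ℝ) * ((m:ℝ)/k) ≤ x
              calc ((min j0 (k-1) : ℕ):ℝ) * ((m:ℝ)/k) ≤ (x * k / m) * ((m:ℝ)/k) := h7
              _ = x := h8
            · by_cases hcase : j0 ≤ k - 1
              · have hminj : min j0 (k-1) = j0 := min_eq_left hcase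
                have h5 : x * k / m < (j0:ℝ) + 1 := Nat.lt_floor_add_one _
                have h6 : x < ((j0:ℝ) + 1) * ((m:ℝ)/k) := by
                  rw [div_lt_iff₀ hmpos] at h5
                  rw [show ((j0:ℝ) + 1) * ((m:ℝ)/k) = (((j0:ℝ)+1) * m)/k by ring,
                    lt_div_iff₀ hkR]
                  nlinarith
                show x ≤ ((min j0 (k-1) + 1 : ℕ):ℝ) * ((m:ℝ)/k)
                rw [hminj]
                push_cast
                linarith
              · have hminj : min j0 (k-1) = k - 1 := min_eq_right (le_of_not_ge hcase)
                have : min j0 (k-1) + 1 = k := by omega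
                rw [this, hgk]
                exact hxm
        -- monotone sandwich
        have hjk' : j < k := by omega
        have hb1 : FnT n x ω - FT x ω ≤ ε/2 := by
          have e1 : FnT n x ω ≤ FnT n (g (j+1)) ω := hFnTmono n ω hg2
          have e2 : FT (g j) ω ≤ FT x ω := hFTmono ω hg1
          have e3 := h1 (j+1) hjk
          have e4 := h2 j hjk'
          have e5 : FnT n (g (j+1)) ω - FT (g (j+1)) ω ≤ |FnT n (g (j+1)) ω - FT (g (j+1)) ω| :=
            le_abs_self _
          linarith
        have hb2 : FT x ω - FnT n x ω ≤ ε/2 := by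
          have e1 : FnT n (g j) ω ≤ FnT n x ω := hFnTmono n ω hg1
          have e2 : FT x ω ≤ FT (g (j+1)) ω := hFTmono ω hg2
          have e3 := h1 j (by omega)
          have e4 := h2 j hjk'
          have e5 : FT (g j) ω - FnT n (g j) ω ≤ |FnT n (g j) ω - FT (g j) ω| := by
            rw [abs_sub_comm]; exact le_abs_self _
          linarith
        rw [abs_le]; constructor <;> linarith
      · -- the tail
        push_neg at hxm
        have e1 : FnT n x ω ≤ 1 := hFnTle1 n x ω
        have e2 : FT (m:ℝ) ω ≤ FT x ω := hFTmono ω hxm.le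
        have e3 : FnT n (g k) ω ≤ FnT n x ω := by
          apply hFnTmono n ω
          rw [hgk]; exact hxm.le
        have e4 := h1 k le_rfl
        rw [hgk] at e4
        have e5 : FT (m:ℝ) ω - FnT n (m:ℝ) ω ≤ |FnT n (m:ℝ) ω - FT (m:ℝ) ω| := by
          rw [abs_sub_comm]; exact le_abs_self _
        rw [hgk] at e3
        have hb1 : FnT n x ω - FT x ω ≤ ε/2 := by linarith
        have hb2 : FT x ω - FnT n x ω ≤ ε/2 := by
          have : FT x ω ≤ 1 := hFTle1 x ω
          linarith
        rw [abs_le]; constructor <;> linarith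
    have hsup : (⨆ x : {x : ℝ // 0 ≤ x}, |FnT n x ω - FT x ω|) ≤ ε/2 :=
      ciSup_le fun x => key x x.2
    have : ε ≤ ε/2 := le_trans hω hsup
    linarith
  calc P {ω | ε ≤ ⨆ x : {x : ℝ // 0 ≤ x}, |FnT n x ω - FT x ω|}
      ≤ P (⋃ j ∈ Finset.range (k+1), {ω | ε/4 ≤ |FnT n (g j) ω - FT (g j) ω|})
        + (P (⋃ j ∈ Finset.range k,
            {ω | ε/4 ≤ FT (((j:ℝ)+1) * ((m:ℝ)/k)) ω - FT ((j:ℝ) * ((m:ℝ)/k)) ω})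
          + P {ω | ε/4 ≤ 1 - FT m ω}) := by
        refine (measure_mono hincl).trans ?_
        refine (measure_union_le _ _).trans ?_
        exact add_le_add le_rfl (measure_union_le _ _)
  _ ≤ (∑ j ∈ Finset.range (k+1), P {ω | ε/4 ≤ |FnT n (g j) ω - FT (g j) ω|})
        + (η/2/2 + η/2/2) := by
        refine add_le_add (measure_biUnion_finset_le _ _) (add_le_add hmB hmA3)
  _ ≤ η/2 + η/2 := by
        refine add_le_add (hN n hn) ?_
        rw [ENNReal.add_halves]
  _ = η := ENNReal.add_halves η
end

section
/- Let (F_n)_{n∈ℕ} and G be jointly measurable random functions from Ω × ℝ₊ to [0,1] such that for every ω the maps x ↦ F_n(x)(ω) and x ↦ G(x)(ω) are nondecreasing. Assume: (i) for every x ≥ 0, F_n(x) → G(x) in probability as n → ∞; (ii) for P-almost every ω, x ↦ G(x)(ω) is continuous on ℝ₊; and (iii) for every η > 0 there exists M > 0 with P(1 − G(M) > η) < η. Then sup_{x ≥ 0} |F_n(x) − G(x)| → 0 in probability as n → ∞. -/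
open MeasureTheory Filter

/-- Uniformization lemma (concluding argument of Theorem 3.1): pointwise
convergence in probability of random monotone `[0,1]`-valued functions on `ℝ₊`
to an a.s. continuous, tight limit implies uniform convergence in probability. -/
theorem monotone_pointwise_to_uniform_in_probability
    (Ω : Type*) [MeasurableSpace Ω] (P : Measure Ω) [IsProbabilityMeasure P]
    (F : ℕ → ℝ → Ω → ℝ) (G : ℝ → Ω → ℝ)
    (hFmeas : ∀ n, Measurable fun p : ℝ × Ω => F n p.1 p.2)
    (hGmeas : Measurable fun p : ℝ × Ω => G p.1 p.2)
    (hFrange : ∀ n x ω, 0 ≤ x → F n x ω ∈ Set.Icc (0:ℝ) 1)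
    (hGrange : ∀ x ω, 0 ≤ x → G x ω ∈ Set.Icc (0:ℝ) 1)
    (hFmono : ∀ n ω, MonotoneOn (fun x => F n x ω) (Set.Ici (0:ℝ)))
    (hGmono : ∀ ω, MonotoneOn (fun x => G x ω) (Set.Ici (0:ℝ)))
    (hconv : ∀ x ≥ (0:ℝ), TendstoInMeasure P (fun n => F n x) atTop (G x))
    (hcont : ∀ᵐ ω ∂P, ContinuousOn (fun x => G x ω) (Set.Ici (0:ℝ)))
    (htight : ∀ η > (0:ℝ), ∃ M > (0:ℝ),
      P {ω | η < 1 - G M ω} < ENNReal.ofReal η) :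
    ∀ ε > 0,
      Tendsto
        (fun n => P {ω | ε ≤ ⨆ x : {x : ℝ // 0 ≤ x}, |F n x ω - G x ω|})
        atTop (nhds 0) := by
  intro ε hε
  rw [ENNReal.tendsto_atTop_zero]
  intro ε' hε'
  -- reduce to a real bound δ
  obtain ⟨δ, hδ0, hδε'⟩ : ∃ δ : ℝ, 0 < δ ∧ ENNReal.ofReal δ ≤ ε' := by
    rcases eq_or_ne ε' ⊤ with h | h
    · exact ⟨1, one_pos, by simp [h]⟩
    · exact ⟨ε'.toReal, ENNReal.toReal_pos hε'.ne' h,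
        by rw [ENNReal.ofReal_toReal h]⟩
  -- tightness choice
  set η := min (ε / 3) (δ / 3) / 2 with hηdef
  have hη0 : 0 < η := by positivity
  have hηε : η < ε / 3 := by
    have h1 : min (ε / 3) (δ / 3) ≤ ε / 3 := min_le_left _ _
    have h2 : 0 < min (ε / 3) (δ / 3) := lt_min (by positivity) (by positivity)
    simp only [hηdef]; linarith
  have hηδ : η ≤ δ / 3 := by
    have h1 : min (ε / 3) (δ / 3) ≤ δ / 3 := min_le_right _ _
    have h2 : 0 < min (ε / 3) (δ / 3) := lt_min (by positivity) (by positivity)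
    simp only [hηdef]; linarith
  obtain ⟨M, hM0, hMtight⟩ := htight η hη0
  -- the grid: for mesh parameter k, points g k i = i * M / (k+1), i = 0, …, k+1
  set g : ℕ → ℕ → ℝ := fun k i => (i : ℝ) * M / (k + 1) with hgdef
  have hg0 : ∀ k i, 0 ≤ g k i := fun k i => by positivity
  have hgtop : ∀ k, g k (k + 1) = M := by
    intro k
    have hk : ((k : ℝ) + 1) ≠ 0 := by positivity
    simp only [hgdef]; push_cast; field_simp
  have hgle : ∀ k i, i ≤ k + 1 → g k i ≤ M := by
    intro k i hi
    have h1 : (i : ℝ) ≤ (k : ℝ) + 1 := by exact_mod_cast hi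
    have h2 : (0:ℝ) < (k : ℝ) + 1 := by positivity
    simp only [hgdef]
    rw [div_le_iff₀ h2]
    nlinarith
  have hgap : ∀ k i, g k (i + 1) - g k i = M / (k + 1) := by
    intro k i
    have hk : ((k : ℝ) + 1) ≠ 0 := by positivity
    simp only [hgdef]; push_cast; field_simp; ring
  have hgicc : ∀ k i, i ≤ k + 1 → g k i ∈ Set.Icc (0:ℝ) M :=
    fun k i hi => ⟨hg0 k i, hgle k i hi⟩
  -- measurability of the sections of G
  have hGx : ∀ x : ℝ, Measurable (G x) := by
    intro x
    exact hGmeas.comp (measurable_const.prodMk measurable_id)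
  -- oscillation of G along the grid
  set osc : ℕ → Ω → ℝ := fun k ω =>
    (Finset.range (k + 1)).sup' Finset.nonempty_range_add_one
      (fun i => G (g k (i + 1)) ω - G (g k i) ω) with hoscdef
  have hoscmeas : ∀ k, Measurable (osc k) := by
    intro k
    have heq : osc k = (Finset.range (k + 1)).sup' Finset.nonempty_range_add_one
        (fun i ω => G (g k (i + 1)) ω - G (g k i) ω) := by
      funext ω
      simp only [hoscdef]
      exact (Finset.sup'_apply Finset.nonempty_range_add_one
        (fun i ω => G (g k (i + 1)) ω - G (g k i) ω) ω).symm
    rw [heq]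
    exact Finset.measurable_sup' Finset.nonempty_range_add_one
      (fun i _ => (hGx (g k (i + 1))).sub (hGx (g k i)))
  have hoscnonneg : ∀ k ω, 0 ≤ osc k ω := by
    intro k ω
    have hle01 : g k 0 ≤ g k 1 := by
      have h := hgap k 0
      have : (0:ℝ) ≤ M / (k + 1) := by positivity
      linarith
    have h01 : G (g k 0) ω ≤ G (g k 1) ω :=
      hGmono ω (hg0 k 0) (hg0 k 1) hle01
    refine le_trans (by linarith : (0:ℝ) ≤ G (g k (0 + 1)) ω - G (g k 0) ω) ?_
    simp only [hoscdef]
    exact Finset.le_sup' (fun i => G (g k (i + 1)) ω - G (g k i) ω)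
      (Finset.mem_range.mpr (Nat.succ_pos k))
  -- a.e. convergence of the oscillation to 0
  have hosc_ae : ∀ᵐ ω ∂P, Tendsto (fun k => osc k ω) atTop (nhds 0) := by
    filter_upwards [hcont] with ω hω
    rw [Metric.tendsto_atTop]
    intro r hr
    have hcomp : IsCompact (Set.Icc (0:ℝ) M) := isCompact_Icc
    have hu : UniformContinuousOn (fun x => G x ω) (Set.Icc 0 M) :=
      hcomp.uniformContinuousOn_of_continuous
        (hω.mono (Set.Icc_subset_Ici_self))
    rw [Metric.uniformContinuousOn_iff] at hu
    obtain ⟨d, hd0, hd⟩ := hu r hr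
    obtain ⟨K, hK⟩ := exists_nat_gt (M / d)
    refine ⟨K, fun k hk => ?_⟩
    have hmesh : M / (k + 1) < d := by
      have h1 : (K : ℝ) ≤ (k : ℝ) := by exact_mod_cast hk
      have h2 : M / d < (k : ℝ) + 1 := by linarith
      rw [div_lt_iff₀ (by positivity)]
      rw [div_lt_iff₀ hd0] at h2
      linarith
    have hlt : osc k ω < r := by
      rw [hoscdef]
      rw [Finset.sup'_lt_iff]
      intro i hi
      rw [Finset.mem_range] at hi
      have hii : i ≤ k + 1 := by omega
      have hi1 : i + 1 ≤ k + 1 := by omega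
      have hdist : dist (g k (i + 1)) (g k i) < d := by
        rw [Real.dist_eq, hgap k i, abs_of_nonneg (by positivity)]
        exact hmesh
      have := hd _ (hgicc k (i+1) hi1) _ (hgicc k i hii) hdist
      rw [Real.dist_eq] at this
      calc G (g k (i + 1)) ω - G (g k i) ω ≤ |G (g k (i + 1)) ω - G (g k i) ω| :=
            le_abs_self _
        _ < r := this
    rw [Real.dist_eq, sub_zero, abs_of_nonneg (hoscnonneg k ω)]
    exact hlt
  -- convergence in measure of the oscillation, pick the mesh k
  have hoscim : TendstoInMeasure P osc atTop (fun _ => (0:ℝ)) :=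
    tendstoInMeasure_of_tendsto_ae
      (fun k => (hoscmeas k).aestronglyMeasurable) hosc_ae
  have h3 : (0:ℝ) < ε / 3 := by positivity
  have hofδ : (0:ENNReal) < ENNReal.ofReal (δ / 3) := by
    rw [ENNReal.ofReal_pos]; positivity
  obtain ⟨k, hk⟩ : ∃ k, P {ω | ε / 3 ≤ dist (osc k ω) 0} < ENNReal.ofReal (δ / 3) := by
    have := (tendstoInMeasure_iff_dist.mp hoscim (ε / 3) h3).eventually_lt_const hofδ
    exact this.exists
  -- the three exceptional sets
  set B : Set Ω := {ω | ε / 3 ≤ osc k ω} with hBdef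
  set C : Set Ω := {ω | ε / 3 ≤ 1 - G M ω} with hCdef
  set A : ℕ → Set Ω := fun n =>
    ⋃ i ∈ Finset.range (k + 2), {ω | ε / 3 ≤ |F n (g k i) ω - G (g k i) ω|} with hAdef
  have hPB : P B ≤ ENNReal.ofReal (δ / 3) := by
    refine le_trans (measure_mono ?_) hk.le
    intro ω hω
    simp only [hBdef, Set.mem_setOf_eq] at hω ⊢
    rw [Real.dist_eq, sub_zero]
    exact hω.trans (le_abs_self _)
  have hPC : P C ≤ ENNReal.ofReal (δ / 3) := by
    refine le_trans (measure_mono ?_) (le_trans hMtight.le (ENNReal.ofReal_le_ofReal hηδ))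
    intro ω hω
    simp only [hCdef, Set.mem_setOf_eq] at hω ⊢
    linarith
  -- the sup' of pointwise distances at grid points
  set D : ℕ → Ω → ℝ := fun n ω =>
    (Finset.range (k + 2)).sup' Finset.nonempty_range_add_one
      (fun i => |F n (g k i) ω - G (g k i) ω|) with hDdef
  -- the key pointwise bound
  have key : ∀ n ω (x : ℝ), 0 ≤ x →
      |F n x ω - G x ω| ≤ D n ω + osc k ω + (1 - G M ω) := by
    intro n ω x hx
    have hDle : ∀ j, j ≤ k + 1 → |F n (g k j) ω - G (g k j) ω| ≤ D n ω := by
      intro j hj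
      simp only [hDdef]
      exact Finset.le_sup' (fun i => |F n (g k i) ω - G (g k i) ω|)
        (Finset.mem_range.mpr (by omega))
    have hoscle : ∀ i, i ≤ k → G (g k (i + 1)) ω - G (g k i) ω ≤ osc k ω := by
      intro i hi
      simp only [hoscdef]
      exact Finset.le_sup' (fun i => G (g k (i + 1)) ω - G (g k i) ω)
        (Finset.mem_range.mpr (by omega))
    have hT0 : 0 ≤ 1 - G M ω := by
      have := (hGrange M ω hM0.le).2; linarith
    have hosc0 : 0 ≤ osc k ω := hoscnonneg k ω
    have hD0 : 0 ≤ D n ω := le_trans (abs_nonneg _) (hDle 0 (by omega))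
    rcases le_total x M with hxM | hMx
    · -- find the subinterval
      set i : ℕ := min (Nat.floor (x * (k + 1) / M)) k with hidef
      have hik : i ≤ k := by rw [hidef]; exact min_le_right _ _
      have hgi_le : g k i ≤ x := by
        have h1 : (i : ℝ) ≤ x * (k + 1) / M := by
          have h0 : i ≤ Nat.floor (x * ((k:ℝ) + 1) / M) := by
            rw [hidef]; exact min_le_left _ _
          calc (i : ℝ) ≤ (Nat.floor (x * ((k:ℝ) + 1) / M) : ℝ) := by
                exact_mod_cast h0
            _ ≤ x * ((k:ℝ) + 1) / M := Nat.floor_le (by positivity)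
            _ = x * (k + 1) / M := by norm_num
        simp only [hgdef]
        rw [div_le_iff₀ (by positivity : (0:ℝ) < (k:ℝ) + 1)]
        rw [le_div_iff₀ hM0] at h1
        linarith
      have hle_gi1 : x ≤ g k (i + 1) := by
        rcases le_or_gt (Nat.floor (x * (k + 1) / M)) k with hf | hf
        · have hieq : i = Nat.floor (x * (k + 1) / M) := hidef.trans (min_eq_left hf)
          have h1 : x * (k + 1) / M < (i : ℝ) + 1 := by
            rw [hieq]; push_cast
            exact Nat.lt_floor_add_one _
          simp only [hgdef]; push_cast
          rw [le_div_iff₀ (by positivity : (0:ℝ) < (k:ℝ) + 1)]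
          rw [div_lt_iff₀ hM0] at h1
          nlinarith
        · have hieq : i = k := hidef.trans (min_eq_right hf.le)
          rw [hieq, hgtop k]; exact hxM
      have hximem : x ∈ Set.Ici (0:ℝ) := hx
      have hmemi : g k i ∈ Set.Ici (0:ℝ) := hg0 k i
      have hmemi1 : g k (i + 1) ∈ Set.Ici (0:ℝ) := hg0 k (i + 1)
      have hF1 : F n x ω ≤ F n (g k (i + 1)) ω := hFmono n ω hximem hmemi1 hle_gi1
      have hF2 : F n (g k i) ω ≤ F n x ω := hFmono n ω hmemi hximem hgi_le
      have hG1 : G x ω ≤ G (g k (i + 1)) ω := hGmono ω hximem hmemi1 hle_gi1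
      have hG2 : G (g k i) ω ≤ G x ω := hGmono ω hmemi hximem hgi_le
      have hd1 : |F n (g k (i + 1)) ω - G (g k (i + 1)) ω| ≤ D n ω := hDle (i+1) (by omega)
      have hd2 : |F n (g k i) ω - G (g k i) ω| ≤ D n ω := hDle i (by omega)
      have ho : G (g k (i + 1)) ω - G (g k i) ω ≤ osc k ω := hoscle i hik
      rw [abs_sub_le_iff]
      constructor
      · have e1 : F n (g k (i + 1)) ω - G (g k (i + 1)) ω ≤ D n ω :=
          (le_abs_self _).trans hd1
        linarith
      · have e2 : G (g k i) ω - F n (g k i) ω ≤ D n ω := by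
          have := (neg_abs_le (F n (g k i) ω - G (g k i) ω))
          linarith [hd2]
        linarith
    · -- x beyond M = g k (k+1)
      have hxmem : x ∈ Set.Ici (0:ℝ) := hx
      have hMmem : M ∈ Set.Ici (0:ℝ) := hM0.le
      have hF1 : F n x ω ≤ 1 := (hFrange n x ω hx).2
      have hG1 : G M ω ≤ G x ω := hGmono ω hMmem hxmem hMx
      have hG2 : G x ω ≤ 1 := (hGrange x ω hx).2
      have hF2 : F n M ω ≤ F n x ω := hFmono n ω hMmem hxmem hMx
      have hdM : |F n M ω - G M ω| ≤ D n ω := by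
        have := hDle (k + 1) (le_refl _)
        rwa [hgtop k] at this
      rw [abs_sub_le_iff]
      constructor
      · linarith
      · have e2 : G M ω - F n M ω ≤ D n ω := by
          have := neg_abs_le (F n M ω - G M ω)
          linarith [hdM]
        linarith
  -- inclusion of the bad event
  haveI : Nonempty {x : ℝ // 0 ≤ x} := ⟨⟨0, le_rfl⟩⟩
  have hincl : ∀ n,
      {ω | ε ≤ ⨆ x : {x : ℝ // 0 ≤ x}, |F n x ω - G x ω|} ⊆ A n ∪ B ∪ C := by
    intro n ω hω
    simp only [Set.mem_setOf_eq] at hω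
    have hsup : (⨆ x : {x : ℝ // 0 ≤ x}, |F n x.1 ω - G x.1 ω|)
        ≤ D n ω + osc k ω + (1 - G M ω) :=
      ciSup_le fun x => key n ω x.1 x.2
    have hεsum : ε ≤ D n ω + osc k ω + (1 - G M ω) := hω.trans hsup
    by_cases hB : ε / 3 ≤ osc k ω
    · exact Or.inl (Or.inr hB)
    by_cases hC : ε / 3 ≤ 1 - G M ω
    · exact Or.inr hC
    push_neg at hB hC
    have hD : ε / 3 ≤ D n ω := by linarith
    left; left
    rw [hDdef] at hD
    rw [Finset.le_sup'_iff] at hD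
    obtain ⟨i, hi, hDi⟩ := hD
    simp only [hAdef, Set.mem_iUnion]
    exact ⟨i, hi, hDi⟩
  -- measure of A n tends to 0
  have hA0 : Tendsto (fun n => P (A n)) atTop (nhds 0) := by
    have hterm : ∀ i, Tendsto
        (fun n => P {ω | ε / 3 ≤ |F n (g k i) ω - G (g k i) ω|}) atTop (nhds 0) := by
      intro i
      have h := tendstoInMeasure_iff_dist.mp (hconv (g k i) (hg0 k i)) (ε / 3) h3
      simpa [Real.dist_eq] using h
    have hsum : Tendsto
        (fun n => ∑ i ∈ Finset.range (k + 2),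
          P {ω | ε / 3 ≤ |F n (g k i) ω - G (g k i) ω|}) atTop (nhds 0) := by
      have := tendsto_finset_sum (Finset.range (k + 2)) (fun i _ => hterm i)
      simpa using this
    exact tendsto_of_tendsto_of_tendsto_of_le_of_le tendsto_const_nhds hsum
      (fun n => zero_le) (fun n => measure_biUnion_finset_le _ _)
  -- conclude
  have hAev : ∀ᶠ n in atTop, P (A n) ≤ ENNReal.ofReal (δ / 3) :=
    (hA0.eventually_lt_const hofδ).mono (fun n h => h.le)
  rw [eventually_atTop] at hAev
  obtain ⟨N, hN⟩ := hAev
  refine ⟨N, fun n hn => ?_⟩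
  calc P {ω | ε ≤ ⨆ x : {x : ℝ // 0 ≤ x}, |F n x ω - G x ω|}
      ≤ P (A n ∪ B ∪ C) := measure_mono (hincl n)
    _ ≤ P (A n) + P B + P C := le_trans (measure_union_le _ _)
        (add_le_add_left (measure_union_le _ _) _)
    _ ≤ ENNReal.ofReal (δ / 3) + ENNReal.ofReal (δ / 3) + ENNReal.ofReal (δ / 3) :=
        add_le_add (add_le_add (hN n hn) hPB) hPC
    _ = ENNReal.ofReal δ := by
        rw [← ENNReal.ofReal_add (by positivity) (by positivity),
            ← ENNReal.ofReal_add (by positivity) (by positivity)]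
        ring_nf
    _ ≤ ε' := hδε'
end

section
/- Let T > 0, (Ω, 𝔉, P) a probability space, and let V, V̂ⁿ : [0,T] × Ω → ℝ (n ∈ ℕ) be jointly measurable processes. Fix x ∈ ℝ and suppose: (i) for every t ∈ [0,T], V̂ⁿ_t → V_t in probability as n → ∞; and (ii) P(V_t = x) = 0 for Lebesgue-almost every t ∈ [0,T]. Then E|F_{n,T}(x) − F_T(x)| → 0 as n → ∞, where F_{n,T}(x) = (1/T)·Leb{t ∈ [0,T] : V̂ⁿ_t ≤ x} and F_T(x) = (1/T)·Leb{t ∈ [0,T] : V_t ≤ x}; in particular F_{n,T}(x) → F_T(x) in probability. -/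
open MeasureTheory Filter
open scoped ENNReal

/-- Pointwise L¹-consistency step in the proof of Theorem 3.1: if the estimated
spot path converges pointwise in probability and the marginal laws have no atom
at `x` for Lebesgue-a.e. `t`, then `E|F_{n,T}(x) − F_T(x)| → 0`; in particular
`F_{n,T}(x) → F_T(x)` in probability. -/
theorem realized_edf_pointwise_L1_consistent
    (T : ℝ) (hT : 0 < T)
    (Ω : Type*) [MeasurableSpace Ω] (P : Measure Ω) [IsProbabilityMeasure P]
    (V : ℝ → Ω → ℝ) (hV : Measurable (Function.uncurry V))
    (Vhat : ℕ → ℝ → Ω → ℝ) (hVhat : ∀ n, Measurable (Function.uncurry (Vhat n)))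
    (x : ℝ)
    (hconv : ∀ t ∈ Set.Icc (0:ℝ) T,
      TendstoInMeasure P (fun n => Vhat n t) atTop (V t))
    (hnoatom : ∀ᵐ t ∂(volume.restrict (Set.Icc (0:ℝ) T)),
      P {ω | V t ω = x} = 0)
    (FT : Ω → ℝ)
    (hFT : ∀ ω, FT ω = (1 / T) * (volume {t ∈ Set.Icc (0:ℝ) T | V t ω ≤ x}).toReal)
    (FnT : ℕ → Ω → ℝ)
    (hFnT : ∀ n ω, FnT n ω
      = (1 / T) * (volume {t ∈ Set.Icc (0:ℝ) T | Vhat n t ω ≤ x}).toReal) :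
    Tendsto (fun n => ∫ ω, |FnT n ω - FT ω| ∂P) atTop (nhds 0) ∧
    TendstoInMeasure P FnT atTop FT := by
  have hT1 : (0:ℝ) < 1 / T := by positivity
  set I : Set ℝ := Set.Icc (0:ℝ) T with hIdef
  have hImeas : MeasurableSet I := measurableSet_Icc
  have hIne : volume I ≠ ⊤ := by
    rw [hIdef, Real.volume_Icc]; exact ENNReal.ofReal_ne_top
  have hVt : ∀ t : ℝ, Measurable (V t) := fun t => hV.comp measurable_prodMk_left
  -- the "bad" sets in the product space
  set E : ℕ → Set (ℝ × Ω) :=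
    fun n => {p | ¬ ((Vhat n p.1 p.2 ≤ x) ↔ (V p.1 p.2 ≤ x))} with hEdef
  have hEmeas : ∀ n, MeasurableSet (E n) := by
    intro n
    have h1 : MeasurableSet {p : ℝ × Ω | Vhat n p.1 p.2 ≤ x} :=
      measurableSet_le (hVhat n) measurable_const
    have h2 : MeasurableSet {p : ℝ × Ω | V p.1 p.2 ≤ x} :=
      measurableSet_le hV measurable_const
    have hEeq : E n = ({p : ℝ × Ω | Vhat n p.1 p.2 ≤ x} \ {p | V p.1 p.2 ≤ x}) ∪
        ({p : ℝ × Ω | V p.1 p.2 ≤ x} \ {p | Vhat n p.1 p.2 ≤ x}) := by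
      ext p
      simp only [hEdef, Set.mem_setOf_eq, Set.mem_union, Set.mem_diff, Set.mem_setOf_eq]
      tauto
    rw [hEeq]
    exact (h1.diff h2).union (h2.diff h1)
  have hhmeas : ∀ n, Measurable (fun t => P (Prod.mk t ⁻¹' E n)) :=
    fun n => measurable_measure_prodMk_left (hEmeas n)
  -- pointwise (in t) convergence of the probability of the bad section
  have hpt : ∀ᵐ t ∂(volume.restrict I),
      Tendsto (fun n => P (Prod.mk t ⁻¹' E n)) atTop (nhds 0) := by
    filter_upwards [hnoatom, ae_restrict_mem hImeas] with t hatom ht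
    rw [ENNReal.tendsto_atTop_zero]
    intro δ hδ
    have hδ2 : (0:ℝ≥0∞) < δ / 2 := ENNReal.half_pos hδ.ne'
    -- shrinking neighborhoods of the atom
    set B : ℕ → Set Ω :=
      fun k => {ω | |V t ω - x| ≤ 1 / (k + 1)} ∩ {ω | V t ω ≠ x} with hBdef
    have hBm : ∀ k, MeasurableSet (B k) := by
      intro k
      exact (measurableSet_le ((hVt t).sub measurable_const).abs measurable_const).inter
        ((hVt t (measurableSet_singleton x)).compl)
    have hBanti : Antitone B := by
      intro j k hjk ω hω
      obtain ⟨h1, h2⟩ := hω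
      simp only [Set.mem_setOf_eq] at h1 ⊢
      refine ⟨le_trans h1 ?_, h2⟩
      have hj : (0:ℝ) < (j:ℝ) + 1 := by positivity
      apply one_div_le_one_div_of_le hj
      exact_mod_cast Nat.succ_le_succ hjk
    have hBempty : ⋂ k, B k = ∅ := by
      rw [Set.eq_empty_iff_forall_notMem]
      intro ω hω
      have hmem := Set.mem_iInter.mp hω
      have hne : V t ω ≠ x := (hmem 0).2
      have hpos : (0:ℝ) < |V t ω - x| := abs_pos.mpr (sub_ne_zero.mpr hne)
      obtain ⟨k, hk⟩ := exists_nat_one_div_lt hpos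
      exact absurd (hmem k).1 (not_le.mpr hk)
    have htendB : Tendsto (P ∘ B) atTop (nhds (P (⋂ k, B k))) :=
      tendsto_measure_iInter_atTop (fun k => (hBm k).nullMeasurableSet) hBanti
        ⟨0, measure_ne_top P _⟩
    rw [hBempty, measure_empty] at htendB
    obtain ⟨k0, hk0⟩ := ENNReal.tendsto_atTop_zero.mp htendB (δ / 2) hδ2
    have hk : P (B k0) ≤ δ / 2 := hk0 k0 le_rfl
    have hε : (0:ℝ) < 1 / (k0 + 1) := by positivity
    obtain ⟨N, hN⟩ := ENNReal.tendsto_atTop_zero.mp (tendstoInMeasure_iff_dist.mp (hconv t ht) (1 / (k0 + 1)) hε) (δ / 2) hδ2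
    refine ⟨N, fun n hn => ?_⟩
    have hsub : Prod.mk t ⁻¹' E n ⊆
        {ω | 1 / ((k0 : ℝ) + 1) ≤ dist (Vhat n t ω) (V t ω)} ∪ (B k0 ∪ {ω | V t ω = x}) := by
      intro ω hω
      simp only [hEdef, Set.mem_preimage, Set.mem_setOf_eq] at hω
      by_cases hvx : V t ω = x
      · exact Or.inr (Or.inr hvx)
      by_cases habs : |V t ω - x| ≤ 1 / ((k0 : ℝ) + 1)
      · exact Or.inr (Or.inl ⟨habs, hvx⟩)
      push_neg at habs
      left
      show 1 / ((k0 : ℝ) + 1) ≤ dist (Vhat n t ω) (V t ω)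
      rw [Real.dist_eq]
      have hcases : (Vhat n t ω ≤ x ∧ ¬ V t ω ≤ x) ∨ (¬ Vhat n t ω ≤ x ∧ V t ω ≤ x) := by
        tauto
      rcases hcases with ⟨h1, h2⟩ | ⟨h1, h2⟩
      · push_neg at h2
        have habs' : |V t ω - x| = V t ω - x := abs_of_pos (by linarith)
        rw [habs'] at habs
        exact le_abs.mpr (Or.inr (by linarith))
      · push_neg at h1
        have habs' : |V t ω - x| = -(V t ω - x) := abs_of_nonpos (by linarith)
        rw [habs'] at habs
        exact le_abs.mpr (Or.inl (by linarith))
    calc P (Prod.mk t ⁻¹' E n)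
        ≤ P {ω | 1 / ((k0 : ℝ) + 1) ≤ dist (Vhat n t ω) (V t ω)}
            + (P (B k0) + P {ω | V t ω = x}) :=
          le_trans (measure_mono hsub)
            (le_trans (measure_union_le _ _) (add_le_add le_rfl (measure_union_le _ _)))
      _ ≤ δ / 2 + (δ / 2 + 0) := add_le_add (hN n hn) (add_le_add hk (le_of_eq hatom))
      _ = δ := by rw [add_zero, ENNReal.add_halves]
  -- dominated convergence in t
  have hIconv : Tendsto (fun n => ∫⁻ t in I, P (Prod.mk t ⁻¹' E n) ∂volume) atTop (nhds 0) := by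
    have := tendsto_lintegral_of_dominated_convergence (μ := volume.restrict I)
      (F := fun n t => P (Prod.mk t ⁻¹' E n)) (f := fun _ => 0) (fun _ => 1)
      (fun n => hhmeas n)
      (fun n => ae_of_all _ fun t => prob_le_one)
      (by rw [lintegral_one, Measure.restrict_apply_univ]; exact hIne)
      hpt
    simpa using this
  -- the key bound: E‖FnT n − FT‖ ≤ (1/T) ∫_I P(bad section) dt
  have hbound : ∀ n, (∫⁻ ω, (‖FnT n ω - FT ω‖₊ : ℝ≥0∞) ∂P)
      ≤ ENNReal.ofReal (1 / T) * ∫⁻ t in I, P (Prod.mk t ⁻¹' E n) ∂volume := by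
    intro n
    -- pointwise bound in ω
    have step1 : ∀ ω, (‖FnT n ω - FT ω‖₊ : ℝ≥0∞)
        ≤ ENNReal.ofReal (1 / T) * volume ((fun t => (t, ω)) ⁻¹' E n ∩ I) := by
      intro ω
      set a := volume {t ∈ I | Vhat n t ω ≤ x} with hadef
      set b := volume {t ∈ I | V t ω ≤ x} with hbdef
      set d := volume ((fun t => (t, ω)) ⁻¹' E n ∩ I) with hddef
      have haf : a ≠ ⊤ := ne_top_of_le_ne_top hIne (measure_mono (Set.sep_subset _ _))
      have hbf : b ≠ ⊤ := ne_top_of_le_ne_top hIne (measure_mono (Set.sep_subset _ _))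
      have hdf : d ≠ ⊤ := ne_top_of_le_ne_top hIne (measure_mono Set.inter_subset_right)
      have hab : a ≤ b + d := by
        refine le_trans (measure_mono ?_) (measure_union_le _ _)
        intro t ht
        by_cases hiff : (Vhat n t ω ≤ x) ↔ (V t ω ≤ x)
        · exact Or.inl ⟨ht.1, hiff.mp ht.2⟩
        · exact Or.inr ⟨hiff, ht.1⟩
      have hba : b ≤ a + d := by
        refine le_trans (measure_mono ?_) (measure_union_le _ _)
        intro t ht
        by_cases hiff : (Vhat n t ω ≤ x) ↔ (V t ω ≤ x)
        · exact Or.inl ⟨ht.1, hiff.mpr ht.2⟩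
        · exact Or.inr ⟨hiff, ht.1⟩
      have h1 : |a.toReal - b.toReal| ≤ d.toReal := by
        rw [abs_sub_le_iff]
        constructor
        · have h2 := ENNReal.toReal_mono (ENNReal.add_ne_top.mpr ⟨hbf, hdf⟩) hab
          rw [ENNReal.toReal_add hbf hdf] at h2
          linarith
        · have h2 := ENNReal.toReal_mono (ENNReal.add_ne_top.mpr ⟨haf, hdf⟩) hba
          rw [ENNReal.toReal_add haf hdf] at h2
          linarith
      calc (‖FnT n ω - FT ω‖₊ : ℝ≥0∞) = ENNReal.ofReal |FnT n ω - FT ω| :=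
            Real.enorm_eq_ofReal_abs _
        _ ≤ ENNReal.ofReal ((1 / T) * d.toReal) := by
            apply ENNReal.ofReal_le_ofReal
            rw [hFnT n ω, hFT ω, ← hadef, ← hbdef, ← mul_sub, abs_mul, abs_of_pos hT1]
            exact mul_le_mul_of_nonneg_left h1 hT1.le
        _ = ENNReal.ofReal (1 / T) * d := by
            rw [ENNReal.ofReal_mul hT1.le, ENNReal.ofReal_toReal hdf]
    -- Tonelli
    have hswap : (∫⁻ ω, volume ((fun t => (t, ω)) ⁻¹' E n ∩ I) ∂P)
        = ∫⁻ t in I, P (Prod.mk t ⁻¹' E n) ∂volume := by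
      have hsec1 : ∀ ω, volume ((fun t => (t, ω)) ⁻¹' E n ∩ I)
          = ∫⁻ t in I, (E n).indicator (fun _ => (1:ℝ≥0∞)) (t, ω) ∂volume := by
        intro ω
        have hpre : MeasurableSet ((fun t : ℝ => (t, ω)) ⁻¹' E n) :=
          measurable_prodMk_right (hEmeas n)
        have heq : (fun t => (E n).indicator (fun _ => (1:ℝ≥0∞)) (t, ω))
            = ((fun t : ℝ => (t, ω)) ⁻¹' E n).indicator (fun _ => (1:ℝ≥0∞)) := by
          funext t
          by_cases h : (t, ω) ∈ E n <;>
            simp [Set.indicator_apply, h, Set.mem_preimage]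
        rw [heq, lintegral_indicator hpre, setLIntegral_one, Measure.restrict_apply hpre]
      have hsec2 : ∀ t, P (Prod.mk t ⁻¹' E n)
          = ∫⁻ ω, (E n).indicator (fun _ => (1:ℝ≥0∞)) (t, ω) ∂P := by
        intro t
        have hpre : MeasurableSet (Prod.mk t ⁻¹' E n) :=
          measurable_prodMk_left (hEmeas n)
        have heq : (fun ω => (E n).indicator (fun _ => (1:ℝ≥0∞)) (t, ω))
            = (Prod.mk t ⁻¹' E n).indicator (fun _ => (1:ℝ≥0∞)) := by
          funext ω
          by_cases h : (t, ω) ∈ E n <;>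
            simp [Set.indicator_apply, h, Set.mem_preimage]
        rw [heq, lintegral_indicator hpre, setLIntegral_one]
      simp only [hsec1]
      have hae : AEMeasurable
          (Function.uncurry fun (ω : Ω) (t : ℝ) => (E n).indicator (fun _ => (1:ℝ≥0∞)) (t, ω))
          (P.prod (volume.restrict I)) :=
        (((measurable_one.indicator (hEmeas n)).comp measurable_swap)).aemeasurable
      rw [lintegral_lintegral_swap hae]
      exact lintegral_congr fun t => (hsec2 t).symm
    calc (∫⁻ ω, (‖FnT n ω - FT ω‖₊ : ℝ≥0∞) ∂P)
        ≤ ∫⁻ ω, ENNReal.ofReal (1 / T) * volume ((fun t => (t, ω)) ⁻¹' E n ∩ I) ∂P :=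
          lintegral_mono step1
      _ = ENNReal.ofReal (1 / T) * ∫⁻ ω, volume ((fun t => (t, ω)) ⁻¹' E n ∩ I) ∂P :=
          lintegral_const_mul' _ _ ENNReal.ofReal_ne_top
      _ = ENNReal.ofReal (1 / T) * ∫⁻ t in I, P (Prod.mk t ⁻¹' E n) ∂volume := by rw [hswap]
  -- L¹ convergence (in ℝ≥0∞)
  have hL : Tendsto (fun n => ∫⁻ ω, (‖FnT n ω - FT ω‖₊ : ℝ≥0∞) ∂P) atTop (nhds 0) := by
    have hmul : Tendsto
        (fun n => ENNReal.ofReal (1 / T) * ∫⁻ t in I, P (Prod.mk t ⁻¹' E n) ∂volume)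
        atTop (nhds 0) := by
      have h2 : Tendsto
          (fun n => ENNReal.ofReal (1 / T) * ∫⁻ t in I, P (Prod.mk t ⁻¹' E n) ∂volume)
          atTop (nhds (ENNReal.ofReal (1 / T) * 0)) :=
        ENNReal.Tendsto.const_mul hIconv (Or.inr ENNReal.ofReal_ne_top)
      simpa using h2
    exact tendsto_of_tendsto_of_tendsto_of_le_of_le tendsto_const_nhds hmul
      (fun n => zero_le) hbound
  -- measurability of FT and FnT
  have hFTm : Measurable FT := by
    have hs : MeasurableSet {p : Ω × ℝ | p.2 ∈ I ∧ V p.2 p.1 ≤ x} :=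
      (hImeas.preimage measurable_snd).inter
        (measurableSet_le (hV.comp measurable_swap) measurable_const)
    have hm : Measurable fun ω => volume
        (Prod.mk ω ⁻¹' {p : Ω × ℝ | p.2 ∈ I ∧ V p.2 p.1 ≤ x}) :=
      measurable_measure_prodMk_left hs
    have hEq : FT = fun ω => (1 / T) * (volume
        (Prod.mk ω ⁻¹' {p : Ω × ℝ | p.2 ∈ I ∧ V p.2 p.1 ≤ x})).toReal :=
      funext fun ω => hFT ω
    rw [hEq]
    exact measurable_const.mul (ENNReal.measurable_toReal.comp hm)
  have hFnTm : ∀ n, Measurable (FnT n) := by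
    intro n
    have hs : MeasurableSet {p : Ω × ℝ | p.2 ∈ I ∧ Vhat n p.2 p.1 ≤ x} :=
      (hImeas.preimage measurable_snd).inter
        (measurableSet_le ((hVhat n).comp measurable_swap) measurable_const)
    have hm : Measurable fun ω => volume
        (Prod.mk ω ⁻¹' {p : Ω × ℝ | p.2 ∈ I ∧ Vhat n p.2 p.1 ≤ x}) :=
      measurable_measure_prodMk_left hs
    have hEq : FnT n = fun ω => (1 / T) * (volume
        (Prod.mk ω ⁻¹' {p : Ω × ℝ | p.2 ∈ I ∧ Vhat n p.2 p.1 ≤ x})).toReal :=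
      funext fun ω => hFnT n ω
    rw [hEq]
    exact measurable_const.mul (ENNReal.measurable_toReal.comp hm)
  constructor
  · -- L¹ convergence in ℝ
    have heq : ∀ n, ∫ ω, |FnT n ω - FT ω| ∂P
        = (∫⁻ ω, (‖FnT n ω - FT ω‖₊ : ℝ≥0∞) ∂P).toReal := by
      intro n
      rw [integral_eq_lintegral_of_nonneg_ae (f := fun ω => |FnT n ω - FT ω|) (ae_of_all _ fun ω => abs_nonneg _)
        (((hFnTm n).sub hFTm).abs.aestronglyMeasurable)]
      congr 1
      exact lintegral_congr fun ω => by rw [← enorm_eq_nnnorm, Real.enorm_eq_ofReal_abs]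
    simp only [heq]
    have := (ENNReal.tendsto_toReal (a := 0) (by simp)).comp hL
    simpa [Function.comp_def] using this
  · -- convergence in measure
    apply tendstoInMeasure_of_tendsto_eLpNorm (p := 1) one_ne_zero
      (fun n => (hFnTm n).aestronglyMeasurable) hFTm.aestronglyMeasurable
    simp only [eLpNorm_one_eq_lintegral_enorm]
    exact hL
end

section
/- Let (ε_i)_{i ≥ 0} be i.i.d. real random variables with E[ε_0] = 0, E[ε_0²] = 1, and E[ε_0⁴] < ∞, let ω ∈ ℝ, and set U_i = ω·ε_i. For integers h ≥ 2 define the noise-variance estimator ω̂²_h = −(1/(h−1))·Σ_{m=1}^{h−1} (U_{m+1} − U_m)(U_{m+2} − U_{m+1}). Then E[ω̂²_h] = ω² for every h ≥ 2, and ω̂²_h → ω² in L² (hence in probability) as h → ∞. -/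
open MeasureTheory ProbabilityTheory Filter

private lemma mul_le_half_sq (a b : ℝ) : a * b ≤ (a ^ 2 + b ^ 2) / 2 := by
  nlinarith [sq_nonneg (a - b)]

private lemma sq_mul_le_half (a b : ℝ) : (a * b) ^ 2 ≤ (a ^ 4 + b ^ 4) / 2 := by
  nlinarith [sq_nonneg (a ^ 2 - b ^ 2)]

private lemma abs_mul_le_half (a b : ℝ) : |a * b| ≤ (a ^ 2 + b ^ 2) / 2 := by
  rcases abs_cases (a * b) with ⟨h, _⟩ | ⟨h, _⟩ <;> nlinarith [sq_nonneg (a - b), sq_nonneg (a + b)]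

private lemma integrable_mul_of_sq {α : Type*} [MeasurableSpace α] {μ : Measure α}
    {f g : α → ℝ} (hfm : AEStronglyMeasurable f μ) (hgm : AEStronglyMeasurable g μ)
    (hf2 : Integrable (fun a => f a ^ 2) μ) (hg2 : Integrable (fun a => g a ^ 2) μ) :
    Integrable (fun a => f a * g a) μ :=
  Integrable.mono' ((hf2.add hg2).div_const 2) (hfm.mul hgm)
    (Filter.Eventually.of_forall fun a => by
      simp only [Pi.add_apply, Real.norm_eq_abs]
      exact abs_mul_le_half (f a) (g a))

set_option maxHeartbeats 2000000 in
/-- Exact unbiasedness and L² consistency of the noise-variance estimator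
(equation (16) of the paper) in the i.i.d.-noise case: with `U_i = ω·ε_i`,
the negative first-order sample autocovariance of the returns
`ΔU_m = U_{m+1} − U_m` has mean `ω²` and converges to `ω²` in `L²`
(hence in probability) as the block length grows. -/
theorem noise_variance_estimator_consistent
    (Ω : Type*) [MeasurableSpace Ω] (P : Measure Ω) [IsProbabilityMeasure P]
    (ε : ℕ → Ω → ℝ)
    (hmeas : ∀ i, Measurable (ε i))
    (hindep : iIndepFun ε P)
    (hident : ∀ i, Measure.map (ε i) P = Measure.map (ε 0) P)
    (hmean : ∫ a, ε 0 a ∂P = 0)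
    (hvar : ∫ a, (ε 0 a) ^ 2 ∂P = 1)
    (hmom4 : Integrable (fun a => (ε 0 a) ^ 4) P)
    (w : ℝ)
    (U : ℕ → Ω → ℝ) (hU : ∀ i a, U i a = w * ε i a)
    (est : ℕ → Ω → ℝ)
    (hest : ∀ h a, est h a
      = -(1 / ((h : ℝ) - 1)) * ∑ m ∈ Finset.Icc 1 (h - 1),
          (U (m + 1) a - U m a) * (U (m + 2) a - U (m + 1) a)) :
    (∀ h : ℕ, 2 ≤ h → ∫ a, est h a ∂P = w ^ 2) ∧
    Tendsto (fun h : ℕ => ∫ a, (est h a - w ^ 2) ^ 2 ∂P) atTop (nhds 0) ∧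
    TendstoInMeasure P est atTop (fun _ => w ^ 2) := by
  classical
  set M : ℝ := ∫ a, (ε 0 a) ^ 4 ∂P with hMdef
  have transferInt : ∀ (g : ℝ → ℝ), Measurable g → ∀ i : ℕ,
      (Integrable (fun a => g (ε i a)) P ↔ Integrable (fun a => g (ε 0 a)) P) := by
    intro g hg i
    have h1 := integrable_map_measure (μ := P) (f := ε i) (g := g)
      hg.aestronglyMeasurable (hmeas i).aemeasurable
    have h2 := integrable_map_measure (μ := P) (f := ε 0) (g := g)
      hg.aestronglyMeasurable (hmeas 0).aemeasurable
    rw [hident i] at h1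
    exact h1.symm.trans h2
  have transferEq : ∀ (g : ℝ → ℝ), Measurable g → ∀ i : ℕ,
      ∫ a, g (ε i a) ∂P = ∫ a, g (ε 0 a) ∂P := by
    intro g hg i
    rw [← integral_map (hmeas i).aemeasurable hg.aestronglyMeasurable, hident i,
      integral_map (hmeas 0).aemeasurable hg.aestronglyMeasurable]
  have int4 : ∀ i, Integrable (fun a => ε i a ^ 4) P := fun i =>
    (transferInt (fun x => x ^ 4) (by measurability) i).mpr hmom4
  have eq4 : ∀ i, ∫ a, ε i a ^ 4 ∂P = M := fun i =>
    transferEq (fun x => x ^ 4) (by measurability) i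
  have int2 : ∀ i, Integrable (fun a => ε i a ^ 2) P := by
    intro i
    refine Integrable.mono' ((int4 i).add (integrable_const 1))
      (((hmeas i).pow_const 2).aestronglyMeasurable)
      (Filter.Eventually.of_forall fun a => ?_)
    simp only [Pi.add_apply, Real.norm_eq_abs, abs_of_nonneg (sq_nonneg (ε i a))]
    nlinarith [sq_nonneg (ε i a ^ 2 - 1)]
  have eq2 : ∀ i, ∫ a, ε i a ^ 2 ∂P = 1 := fun i =>
    (transferEq (fun x => x ^ 2) (by measurability) i).trans hvar
  have int1 : ∀ i, Integrable (ε i) P := by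
    intro i
    refine Integrable.mono' ((int2 i).add (integrable_const 1))
      (hmeas i).aestronglyMeasurable (Filter.Eventually.of_forall fun a => ?_)
    simp only [Pi.add_apply, Real.norm_eq_abs]
    nlinarith [sq_abs (ε i a), sq_nonneg (|ε i a| - 1), abs_nonneg (ε i a)]
  have eq1 : ∀ i, ∫ a, ε i a ∂P = 0 := fun i =>
    (transferEq (fun x => x) measurable_id i).trans hmean
  have M_nonneg : 0 ≤ M := integral_nonneg fun a => by positivity
  have crossInt : ∀ i j, i ≠ j → Integrable (fun a => ε i a * ε j a) P := fun i j hij =>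
    (hindep.indepFun hij).integrable_mul (int1 i) (int1 j)
  have crossEq : ∀ i j, i ≠ j → ∫ a, ε i a * ε j a ∂P = 0 := by
    intro i j hij
    have h := (hindep.indepFun hij).integral_mul_eq_mul_integral (int1 i).aestronglyMeasurable (int1 j).aestronglyMeasurable
    simpa [Pi.mul_apply, eq1 i, eq1 j] using h
  -- differenced noise and centered summands
  set D : ℕ → Ω → ℝ := fun m a => ε (m + 1) a - ε m a with hDdef
  set Y : ℕ → Ω → ℝ := fun m a => w ^ 2 * (D m a * D (m + 1) a) + w ^ 2 with hYdef
  have measD : ∀ m, Measurable (D m) := fun m => (hmeas (m + 1)).sub (hmeas m)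
  have measY : ∀ m, Measurable (Y m) := fun m =>
    (measurable_const.mul ((measD m).mul (measD (m + 1)))).add measurable_const
  have intD2 : ∀ m, Integrable (fun a => D m a ^ 2) P := by
    intro m
    have hx : (fun a => D m a ^ 2)
        = fun a => ε (m + 1) a ^ 2 - 2 * (ε (m + 1) a * ε m a) + ε m a ^ 2 :=
      funext fun a => by simp only [hDdef]; ring
    rw [hx]
    exact ((int2 (m + 1)).sub ((crossInt (m + 1) m (by omega)).const_mul 2)).add (int2 m)
  have intD4 : ∀ m, Integrable (fun a => D m a ^ 4) P := by
    intro m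
    refine Integrable.mono' (((int4 (m + 1)).add (int4 m)).const_mul 8)
      (((measD m).pow_const 4).aestronglyMeasurable)
      (Filter.Eventually.of_forall fun a => ?_)
    have h4 : (0:ℝ) ≤ D m a ^ 4 := by positivity
    simp only [Pi.add_apply, Real.norm_eq_abs, abs_of_nonneg h4, hDdef,
      abs_of_nonneg (by positivity : (0:ℝ) ≤ (ε (m + 1) a - ε m a) ^ 4)]
    nlinarith [sq_nonneg (ε (m+1) a + ε m a), sq_nonneg (ε (m+1) a - ε m a),
      sq_nonneg (ε (m+1) a ^ 2 - ε m a ^ 2), sq_nonneg (ε (m+1) a ^ 2 + ε m a ^ 2),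
      sq_nonneg (ε (m+1) a * ε m a)]
  have eqD4_le : ∀ m, ∫ a, D m a ^ 4 ∂P ≤ 16 * M := by
    intro m
    have hb : ∀ a, D m a ^ 4 ≤ 8 * (ε (m + 1) a ^ 4 + ε m a ^ 4) := by
      intro a
      simp only [hDdef]
      nlinarith [sq_nonneg (ε (m+1) a + ε m a), sq_nonneg (ε (m+1) a - ε m a),
        sq_nonneg (ε (m+1) a ^ 2 - ε m a ^ 2), sq_nonneg (ε (m+1) a ^ 2 + ε m a ^ 2),
        sq_nonneg (ε (m+1) a * ε m a)]
    calc ∫ a, D m a ^ 4 ∂P ≤ ∫ a, 8 * (ε (m + 1) a ^ 4 + ε m a ^ 4) ∂P :=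
          integral_mono (intD4 m) (((int4 (m + 1)).add (int4 m)).const_mul 8) hb
      _ = 8 * ((∫ a, ε (m + 1) a ^ 4 ∂P) + ∫ a, ε m a ^ 4 ∂P) := by
          rw [integral_const_mul, integral_add (int4 (m + 1)) (int4 m)]
      _ = 16 * M := by rw [eq4 (m + 1), eq4 m]; ring
  have intX : ∀ m, Integrable (fun a => D m a * D (m + 1) a) P := fun m =>
    integrable_mul_of_sq (measD m).aestronglyMeasurable (measD (m + 1)).aestronglyMeasurable
      (intD2 m) (intD2 (m + 1))
  have intX2 : ∀ m, Integrable (fun a => (D m a * D (m + 1) a) ^ 2) P := by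
    intro m
    have h1 : Integrable (fun a => (D m a ^ 2) ^ 2) P := by
      simpa [← pow_mul] using intD4 m
    have h2 : Integrable (fun a => (D (m + 1) a ^ 2) ^ 2) P := by
      simpa [← pow_mul] using intD4 (m + 1)
    have := integrable_mul_of_sq ((measD m).pow_const 2).aestronglyMeasurable
      ((measD (m + 1)).pow_const 2).aestronglyMeasurable h1 h2
    simpa [mul_pow] using this
  have eqX2_le : ∀ m, ∫ a, (D m a * D (m + 1) a) ^ 2 ∂P ≤ 16 * M := by
    intro m
    have hb : ∀ a, (D m a * D (m + 1) a) ^ 2 ≤ (D m a ^ 4 + D (m + 1) a ^ 4) / 2 := by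
      intro a; exact sq_mul_le_half _ _
    calc ∫ a, (D m a * D (m + 1) a) ^ 2 ∂P
        ≤ ∫ a, (D m a ^ 4 + D (m + 1) a ^ 4) / 2 ∂P :=
          integral_mono (intX2 m) (((intD4 m).add (intD4 (m + 1))).div_const 2) hb
      _ = ((∫ a, D m a ^ 4 ∂P) + ∫ a, D (m + 1) a ^ 4 ∂P) / 2 := by
          rw [integral_div, integral_add (intD4 m) (intD4 (m + 1))]
      _ ≤ (16 * M + 16 * M) / 2 := by
          have := eqD4_le m; have := eqD4_le (m + 1); linarith
      _ = 16 * M := by ring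
  have intY : ∀ m, Integrable (Y m) P := by
    intro m
    have : Integrable (fun a => w ^ 2 * (D m a * D (m + 1) a) + w ^ 2) P :=
      ((intX m).const_mul (w ^ 2)).add (integrable_const (w ^ 2))
    exact this
  have intY2 : ∀ m, Integrable (fun a => Y m a ^ 2) P := by
    intro m
    have hx : (fun a => Y m a ^ 2) = fun a =>
        w ^ 4 * (D m a * D (m + 1) a) ^ 2 + 2 * w ^ 4 * (D m a * D (m + 1) a) + w ^ 4 :=
      funext fun a => by simp only [hYdef]; ring
    rw [hx]
    exact (((intX2 m).const_mul (w ^ 4)).add ((intX m).const_mul (2 * w ^ 4))).add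
      (integrable_const (w ^ 4))
  set K : ℝ := 32 * w ^ 4 * M + 2 * w ^ 4 with hKdef
  have hw4 : (0:ℝ) ≤ w ^ 4 := by positivity
  have K_nonneg : 0 ≤ K := by
    have : (0:ℝ) ≤ 32 * w ^ 4 * M := by positivity
    nlinarith
  have eqY2_le : ∀ m, ∫ a, Y m a ^ 2 ∂P ≤ K := by
    intro m
    have hb : ∀ a, Y m a ^ 2 ≤ 2 * w ^ 4 * (D m a * D (m + 1) a) ^ 2 + 2 * w ^ 4 := by
      intro a; simp only [hYdef]
      nlinarith [sq_nonneg (w ^ 2 * (D m a * D (m + 1) a) - w ^ 2)]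
    calc ∫ a, Y m a ^ 2 ∂P
        ≤ ∫ a, (2 * w ^ 4 * (D m a * D (m + 1) a) ^ 2 + 2 * w ^ 4) ∂P :=
          integral_mono (intY2 m) (((intX2 m).const_mul (2 * w ^ 4)).add
            (integrable_const (2 * w ^ 4))) hb
      _ = 2 * w ^ 4 * (∫ a, (D m a * D (m + 1) a) ^ 2 ∂P) + 2 * w ^ 4 := by
          rw [integral_add ((intX2 m).const_mul (2 * w ^ 4)) (integrable_const (2 * w ^ 4)),
            integral_const_mul, integral_const]
          simp
      _ ≤ 2 * w ^ 4 * (16 * M) + 2 * w ^ 4 := by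
          have h := eqX2_le m
          nlinarith [mul_le_mul_of_nonneg_left h (by positivity : (0:ℝ) ≤ 2 * w ^ 4)]
      _ = K := by rw [hKdef]; ring
  have eqX : ∀ m, ∫ a, D m a * D (m + 1) a ∂P = -1 := by
    intro m
    have hx : (fun a => D m a * D (m + 1) a) = fun a =>
        ε (m + 1) a * ε (m + 2) a - ε (m + 1) a ^ 2 - ε m a * ε (m + 2) a
          + ε m a * ε (m + 1) a :=
      funext fun a => by simp only [hDdef]; ring
    have iA : Integrable (fun a => ε (m + 1) a * ε (m + 2) a) P := crossInt (m + 1) (m + 2) (by omega)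
    have iB : Integrable (fun a => ε (m + 1) a ^ 2) P := int2 (m + 1)
    have iC : Integrable (fun a => ε m a * ε (m + 2) a) P := crossInt m (m + 2) (by omega)
    have iE : Integrable (fun a => ε m a * ε (m + 1) a) P := crossInt m (m + 1) (by omega)
    have iAB : Integrable (fun a => ε (m + 1) a * ε (m + 2) a - ε (m + 1) a ^ 2) P := iA.sub iB
    have iABC : Integrable
        (fun a => ε (m + 1) a * ε (m + 2) a - ε (m + 1) a ^ 2 - ε m a * ε (m + 2) a) P := iAB.sub iC
    rw [hx, integral_add iABC iE, integral_sub iAB iC, integral_sub iA iB,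
      crossEq (m + 1) (m + 2) (by omega), eq2 (m + 1), crossEq m (m + 2) (by omega),
      crossEq m (m + 1) (by omega)]
    ring
  have eqY : ∀ m, ∫ a, Y m a ∂P = 0 := by
    intro m
    have : ∫ a, Y m a ∂P = w ^ 2 * (∫ a, D m a * D (m + 1) a ∂P) + w ^ 2 := by
      simp only [hYdef]
      rw [integral_add ((intX m).const_mul (w ^ 2)) (integrable_const (w ^ 2)),
        integral_const_mul, integral_const]
      simp
    rw [this, eqX m]; ring
  have intYY : ∀ m m', Integrable (fun a => Y m a * Y m' a) P := fun m m' =>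
    integrable_mul_of_sq (measY m).aestronglyMeasurable (measY m').aestronglyMeasurable
      (intY2 m) (intY2 m')
  have eqYY_le : ∀ m m', ∫ a, Y m a * Y m' a ∂P ≤ K := by
    intro m m'
    have hb : ∀ a, Y m a * Y m' a ≤ (Y m a ^ 2 + Y m' a ^ 2) / 2 := by
      intro a; exact mul_le_half_sq _ _
    calc ∫ a, Y m a * Y m' a ∂P ≤ ∫ a, (Y m a ^ 2 + Y m' a ^ 2) / 2 ∂P :=
          integral_mono (intYY m m') (((intY2 m).add (intY2 m')).div_const 2) hb
      _ = ((∫ a, Y m a ^ 2 ∂P) + ∫ a, Y m' a ^ 2 ∂P) / 2 := by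
          rw [integral_div, integral_add (intY2 m) (intY2 m')]
      _ ≤ K := by have := eqY2_le m; have := eqY2_le m'; linarith
  have indepY : ∀ m m', m + 3 ≤ m' → IndepFun (Y m) (Y m') P := by
    intro m m' hmm'
    have hdisj : Disjoint ({m, m + 1, m + 2} : Finset ℕ) ({m', m' + 1, m' + 2} : Finset ℕ) := by
      simp only [Finset.disjoint_left, Finset.mem_insert, Finset.mem_singleton]
      omega
    have hbase := hindep.indepFun_finset {m, m + 1, m + 2} {m', m' + 1, m' + 2} hdisj hmeas
    let g : ∀ k : ℕ, (({k, k + 1, k + 2} : Finset ℕ) → ℝ) → ℝ := fun k v =>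
      w ^ 2 * ((v ⟨k + 1, by simp⟩ - v ⟨k, by simp⟩) * (v ⟨k + 2, by simp⟩ - v ⟨k + 1, by simp⟩))
        + w ^ 2
    have hg : ∀ k, Measurable (g k) := by
      intro k
      fun_prop
    exact hbase.comp (hg m) (hg m')
  have eqYY_far : ∀ m m', m + 3 ≤ m' → ∫ a, Y m a * Y m' a ∂P = 0 := by
    intro m m' hmm'
    have h := (indepY m m' hmm').integral_mul_eq_mul_integral (intY m).aestronglyMeasurable (intY m').aestronglyMeasurable
    have h2 : ∫ a, Y m a * Y m' a ∂P = (∫ a, Y m a ∂P) * ∫ a, Y m' a ∂P := h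
    rw [h2, eqY m, eqY m']
    ring
  -- casting helpers
  have hcast : ∀ h : ℕ, 2 ≤ h → ((h - 1 : ℕ) : ℝ) = (h : ℝ) - 1 := by
    intro h hh
    have h1 : 1 ≤ h := by omega
    push_cast [h1]
    ring
  have hn_ne : ∀ h : ℕ, 2 ≤ h → ((h : ℝ) - 1) ≠ 0 := by
    intro h hh
    have : (2 : ℝ) ≤ (h : ℝ) := by exact_mod_cast hh
    linarith
  -- representation of the centered estimator
  have hrep : ∀ h : ℕ, 2 ≤ h → ∀ a, est h a - w ^ 2
      = -(1 / ((h : ℝ) - 1)) * ∑ m ∈ Finset.Icc 1 (h - 1), Y m a := by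
    intro h hh a
    have hn := hn_ne h hh
    have hcard : (Finset.Icc 1 (h - 1)).card = h - 1 := by rw [Nat.card_Icc]; omega
    have hterm : ∀ m : ℕ, w ^ 2 * (D m a * D (m + 1) a)
        = (U (m + 1) a - U m a) * (U (m + 2) a - U (m + 1) a) := by
      intro m; simp only [hU, hDdef]; ring
    have hsum : ∑ m ∈ Finset.Icc 1 (h - 1), Y m a
        = (∑ m ∈ Finset.Icc 1 (h - 1),
            (U (m + 1) a - U m a) * (U (m + 2) a - U (m + 1) a)) + ((h : ℝ) - 1) * w ^ 2 := by
      have h1 : ∑ m ∈ Finset.Icc 1 (h - 1), Y m a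
          = (∑ m ∈ Finset.Icc 1 (h - 1), w ^ 2 * (D m a * D (m + 1) a))
            + (h - 1 : ℕ) • (w ^ 2 : ℝ) := by
        simp only [hYdef]
        rw [Finset.sum_add_distrib, Finset.sum_const, hcard]
      rw [h1, Finset.sum_congr rfl fun m _ => hterm m, nsmul_eq_mul, hcast h hh]
    rw [hest, hsum]
    field_simp
    ring
  -- the squared centered estimator as a double sum
  have hfun : ∀ h : ℕ, 2 ≤ h → (fun a => (est h a - w ^ 2) ^ 2)
      = fun a => (1 / ((h : ℝ) - 1)) ^ 2 * ∑ m ∈ Finset.Icc 1 (h - 1),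
          ∑ m' ∈ Finset.Icc 1 (h - 1), Y m a * Y m' a := by
    intro h hh
    funext a
    have hS : (∑ m ∈ Finset.Icc 1 (h - 1), Y m a) ^ 2
        = ∑ m ∈ Finset.Icc 1 (h - 1), ∑ m' ∈ Finset.Icc 1 (h - 1), Y m a * Y m' a := by
      rw [pow_two, Finset.sum_mul_sum]
    rw [hrep h hh a, mul_pow, neg_sq, hS]
  have intS2 : ∀ h : ℕ, 2 ≤ h → Integrable (fun a => (est h a - w ^ 2) ^ 2) P := by
    intro h hh
    rw [hfun h hh]
    exact (integrable_finset_sum _ fun m _ =>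
      integrable_finset_sum _ fun m' _ => intYY m m').const_mul _
  have eqS2 : ∀ h : ℕ, 2 ≤ h → ∫ a, (est h a - w ^ 2) ^ 2 ∂P
      = (1 / ((h : ℝ) - 1)) ^ 2 * ∑ m ∈ Finset.Icc 1 (h - 1),
          ∑ m' ∈ Finset.Icc 1 (h - 1), ∫ a, Y m a * Y m' a ∂P := by
    intro h hh
    rw [hfun h hh, integral_const_mul,
      integral_finset_sum _ fun m _ => integrable_finset_sum _ fun m' _ => intYY m m']
    congr 1
    exact Finset.sum_congr rfl fun m _ => integral_finset_sum _ fun m' _ => intYY m m'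
  -- covariance sum bound
  have inner_le : ∀ (m h : ℕ), ∑ m' ∈ Finset.Icc 1 (h - 1), ∫ a, Y m a * Y m' a ∂P
      ≤ 5 * K := by
    intro m h
    have hstep : ∀ m' ∈ Finset.Icc 1 (h - 1), ∫ a, Y m a * Y m' a ∂P
        ≤ if m' ∈ Finset.Icc (m - 2) (m + 2) then K else 0 := by
      intro m' _
      by_cases hc : m' ∈ Finset.Icc (m - 2) (m + 2)
      · simpa [hc] using eqYY_le m m'
      · simp only [hc, if_false]
        have hfar : m + 3 ≤ m' ∨ m' + 3 ≤ m := by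
          simp only [Finset.mem_Icc, not_and_or, not_le] at hc
          omega
        rcases hfar with h1 | h1
        · exact le_of_eq (eqYY_far m m' h1)
        · have hz := eqYY_far m' m h1
          have hcomm : (fun a => Y m a * Y m' a) = fun a => Y m' a * Y m a :=
            funext fun a => mul_comm _ _
          rw [hcomm, hz]
    calc ∑ m' ∈ Finset.Icc 1 (h - 1), ∫ a, Y m a * Y m' a ∂P
        ≤ ∑ m' ∈ Finset.Icc 1 (h - 1),
            (if m' ∈ Finset.Icc (m - 2) (m + 2) then K else 0) := Finset.sum_le_sum hstep
      _ = ∑ m' ∈ (Finset.Icc 1 (h - 1)).filter (fun m' => m' ∈ Finset.Icc (m - 2) (m + 2)), K :=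
          (Finset.sum_filter _ _).symm
      _ = ((Finset.Icc 1 (h - 1)).filter
            (fun m' => m' ∈ Finset.Icc (m - 2) (m + 2))).card • K := Finset.sum_const K
      _ ≤ 5 * K := by
          have hsub : (Finset.Icc 1 (h - 1)).filter (fun m' => m' ∈ Finset.Icc (m - 2) (m + 2))
              ⊆ Finset.Icc (m - 2) (m + 2) := fun x hx => (Finset.mem_filter.mp hx).2
          have hcard : ((Finset.Icc 1 (h - 1)).filter
              (fun m' => m' ∈ Finset.Icc (m - 2) (m + 2))).card ≤ 5 := by
            refine le_trans (Finset.card_le_card hsub) ?_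
            rw [Nat.card_Icc]; omega
          rw [nsmul_eq_mul]
          exact mul_le_mul_of_nonneg_right (by exact_mod_cast hcard) K_nonneg
  have hvar_le : ∀ h : ℕ, 2 ≤ h → ∫ a, (est h a - w ^ 2) ^ 2 ∂P ≤ 5 * K / ((h : ℝ) - 1) := by
    intro h hh
    rw [eqS2 h hh]
    have hcard : (Finset.Icc 1 (h - 1)).card = h - 1 := by rw [Nat.card_Icc]; omega
    have houter : ∑ m ∈ Finset.Icc 1 (h - 1),
        ∑ m' ∈ Finset.Icc 1 (h - 1), ∫ a, Y m a * Y m' a ∂P ≤ ((h - 1 : ℕ) : ℝ) * (5 * K) := by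
      calc ∑ m ∈ Finset.Icc 1 (h - 1), ∑ m' ∈ Finset.Icc 1 (h - 1), ∫ a, Y m a * Y m' a ∂P
          ≤ ∑ _m ∈ Finset.Icc 1 (h - 1), 5 * K := Finset.sum_le_sum fun m _ => inner_le m h
        _ = ((h - 1 : ℕ) : ℝ) * (5 * K) := by
            rw [Finset.sum_const, hcard, nsmul_eq_mul]
    have hn := hn_ne h hh
    calc (1 / ((h : ℝ) - 1)) ^ 2 * ∑ m ∈ Finset.Icc 1 (h - 1),
        ∑ m' ∈ Finset.Icc 1 (h - 1), ∫ a, Y m a * Y m' a ∂P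
        ≤ (1 / ((h : ℝ) - 1)) ^ 2 * (((h - 1 : ℕ) : ℝ) * (5 * K)) :=
          mul_le_mul_of_nonneg_left houter (by positivity)
      _ = 5 * K / ((h : ℝ) - 1) := by
          rw [hcast h hh]
          field_simp
  -- L² convergence
  have htendsL2 : Tendsto (fun h : ℕ => ∫ a, (est h a - w ^ 2) ^ 2 ∂P) atTop (nhds 0) := by
    have hupper : Tendsto (fun h : ℕ => 5 * K / ((h : ℝ) - 1)) atTop (nhds 0) := by
      apply Tendsto.div_atTop tendsto_const_nhds
      have h1 : Tendsto (fun h : ℕ => (h : ℝ) + (-1)) atTop atTop :=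
        tendsto_atTop_add_const_right atTop (-1) tendsto_natCast_atTop_atTop
      simpa [sub_eq_add_neg] using h1
    refine tendsto_of_tendsto_of_tendsto_of_le_of_le' tendsto_const_nhds hupper ?_ ?_
    · exact Filter.Eventually.of_forall fun h => integral_nonneg fun a => sq_nonneg _
    · filter_upwards [eventually_ge_atTop 2] with h hh using hvar_le h hh
  -- unbiasedness
  have part1 : ∀ h : ℕ, 2 ≤ h → ∫ a, est h a ∂P = w ^ 2 := by
    intro h hh
    have hfun2 : (fun a => est h a - w ^ 2)
        = fun a => -(1 / ((h : ℝ) - 1)) * ∑ m ∈ Finset.Icc 1 (h - 1), Y m a :=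
      funext fun a => hrep h hh a
    have hintsub : Integrable (fun a => est h a - w ^ 2) P := by
      rw [hfun2]
      exact (integrable_finset_sum _ fun m _ => intY m).const_mul _
    have hint0 : ∫ a, (est h a - w ^ 2) ∂P = 0 := by
      rw [hfun2, integral_const_mul, integral_finset_sum _ fun m _ => intY m]
      simp [eqY]
    have hintest : Integrable (est h) P := by
      have h2 := hintsub.add (integrable_const (w ^ 2))
      have h3 : ((fun a => est h a - w ^ 2) + fun _ => w ^ 2) = est h :=
        funext fun a => by simp only [Pi.add_apply]; ring
      rwa [h3] at h2
    rw [integral_sub hintest (integrable_const _)] at hint0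
    simp only [integral_const, probReal_univ, smul_eq_mul, one_mul] at hint0
    linarith
  -- convergence in probability via Chebyshev
  have part3 : TendstoInMeasure P est atTop (fun _ => w ^ 2) := by
    rw [tendstoInMeasure_iff_dist]
    intro δ hδ
    have hb : ∀ h : ℕ, 2 ≤ h → P {x | δ ≤ dist (est h x) (w ^ 2)}
        ≤ ENNReal.ofReal ((∫ a, (est h a - w ^ 2) ^ 2 ∂P) / δ ^ 2) := by
      intro h hh
      have hsub : {x | δ ≤ dist (est h x) (w ^ 2)}
          ⊆ {x | δ ^ 2 ≤ (est h x - w ^ 2) ^ 2} := by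
        intro x hx
        simp only [Set.mem_setOf_eq, Real.dist_eq] at hx ⊢
        nlinarith [abs_nonneg (est h x - w ^ 2), sq_abs (est h x - w ^ 2)]
      refine le_trans (measure_mono hsub) ?_
      have hmark := mul_meas_ge_le_integral_of_nonneg (μ := P)
        (f := fun x => (est h x - w ^ 2) ^ 2)
        (ae_of_all _ fun x => sq_nonneg _) (intS2 h hh) (δ ^ 2)
      have hfin : P {x | δ ^ 2 ≤ (est h x - w ^ 2) ^ 2} ≠ ⊤ := measure_ne_top P _
      rw [← ENNReal.ofReal_toReal hfin]
      apply ENNReal.ofReal_le_ofReal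
      rw [le_div_iff₀ (by positivity : (0 : ℝ) < δ ^ 2)]
      nlinarith [(show δ ^ 2 * (P {x | δ ^ 2 ≤ (est h x - w ^ 2) ^ 2}).toReal
        ≤ ∫ a, (est h a - w ^ 2) ^ 2 ∂P from hmark)]
    have hupper : Tendsto (fun h : ℕ =>
        ENNReal.ofReal ((∫ a, (est h a - w ^ 2) ^ 2 ∂P) / δ ^ 2)) atTop (nhds 0) := by
      have h1 : Tendsto (fun h : ℕ => (∫ a, (est h a - w ^ 2) ^ 2 ∂P) / δ ^ 2)
          atTop (nhds 0) := by
        simpa using htendsL2.div_const (δ ^ 2)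
      have h2 := (ENNReal.continuous_ofReal.tendsto 0).comp h1
      simpa [Function.comp_def] using h2
    refine tendsto_of_tendsto_of_tendsto_of_le_of_le' tendsto_const_nhds hupper
      (Filter.Eventually.of_forall fun h => zero_le) ?_
    filter_upwards [eventually_ge_atTop 2] with h hh using hb h hh
  exact ⟨part1, htendsL2, part3⟩
end
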